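/- arXiv:1901.07821 — 5 statements merged into one kernel-verified Lean document; each statement's English description precedes it below -/
import Mathlib

section
/- If the divergence d(p,q) is convex in its second argument q, then the rate-distortion-perception function R(D,P) is jointly convex in (D,P): for λ ∈ [0,1], λ R(D1,P1) + (1−λ) R(D2,P2) ≥ R(λD1 + (1−λ)D2, λP1 + (1−λ)P2). -/
open scoped BigOperators ENNReal

/-- A probability mass function on a finite alphabet. -/
def IsPMF {𝓧 : Type*} [Fintype 𝓧] (p : 𝓧 → ℝ) : Prop :=
  (∀ x, 0 ≤ p x) ∧ ∑ x, p x = 1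

/-- A conditional distribution (channel/kernel) on a finite alphabet. -/
def IsKernel {𝓧 : Type*} [Fintype 𝓧] (K : 𝓧 → 𝓧 → ℝ) : Prop :=
  ∀ x, IsPMF (K x)

/-- Output (marginal) distribution of the reconstruction `X̂`. -/
def outDist {𝓧 : Type*} [Fintype 𝓧] (p : 𝓧 → ℝ) (K : 𝓧 → 𝓧 → ℝ) : 𝓧 → ℝ :=
  fun y => ∑ x, p x * K x y

/-- Expected distortion `E[Δ(X, X̂)]`. -/
def expDistortion {𝓧 : Type*} [Fintype 𝓧] (p : 𝓧 → ℝ) (Δ : 𝓧 → 𝓧 → ℝ)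
    (K : 𝓧 → 𝓧 → ℝ) : ℝ :=
  ∑ x, ∑ y, p x * K x y * Δ x y

/-- Mutual information `I(X; X̂)` (natural log). -/
noncomputable def mutualInfo {𝓧 : Type*} [Fintype 𝓧] (p : 𝓧 → ℝ) (K : 𝓧 → 𝓧 → ℝ) : ℝ :=
  ∑ x, ∑ y, p x * K x y * Real.log (K x y / outDist p K y)

/-- The rate-distortion-perception function
`R(D,P) = min { I(X;X̂) : E[Δ(X,X̂)] ≤ D, d(p_X, p_X̂) ≤ P }`,
with the convention that the minimum over an empty set is `+∞`. -/
noncomputable def RDP {𝓧 : Type*} [Fintype 𝓧] (p : 𝓧 → ℝ) (Δ : 𝓧 → 𝓧 → ℝ)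
    (d : (𝓧 → ℝ) → (𝓧 → ℝ) → ℝ) (D P : ℝ) : ℝ≥0∞ :=
  sInf { r : ℝ≥0∞ | ∃ K : 𝓧 → 𝓧 → ℝ, IsKernel K ∧ expDistortion p Δ K ≤ D ∧
    d p (outDist p K) ≤ P ∧ r = ENNReal.ofReal (mutualInfo p K) }

/-- The rate-distortion function without perception constraint, `R(D, ∞)`. -/
noncomputable def RDPinf {𝓧 : Type*} [Fintype 𝓧] (p : 𝓧 → ℝ) (Δ : 𝓧 → 𝓧 → ℝ)
    (D : ℝ) : ℝ≥0∞ :=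
  sInf { r : ℝ≥0∞ | ∃ K : 𝓧 → 𝓧 → ℝ, IsKernel K ∧ expDistortion p Δ K ≤ D ∧
    r = ENNReal.ofReal (mutualInfo p K) }

/-- log-sum inequality for two points (convexity of `(a,b) ↦ a log (a/b)`). -/
lemma logsum_two (a₁ a₂ b₁ b₂ l : ℝ) (ha₁ : 0 ≤ a₁) (ha₂ : 0 ≤ a₂)
    (hb₁ : 0 ≤ b₁) (hb₂ : 0 ≤ b₂)
    (h₁ : 0 < a₁ → 0 < b₁) (h₂ : 0 < a₂ → 0 < b₂)
    (hl0 : 0 ≤ l) (hl1 : l ≤ 1) :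
    (l * a₁ + (1 - l) * a₂) * Real.log ((l * a₁ + (1 - l) * a₂) / (l * b₁ + (1 - l) * b₂))
      ≤ l * (a₁ * Real.log (a₁ / b₁)) + (1 - l) * (a₂ * Real.log (a₂ / b₂)) := by
  have hl1' : 0 ≤ 1 - l := by linarith
  set a := l * a₁ + (1 - l) * a₂ with ha_def
  set b := l * b₁ + (1 - l) * b₂ with hb_def
  have ha : 0 ≤ a := by positivity
  rcases eq_or_lt_of_le ha with hA | hA
  · -- a = 0 : both sides are 0
    have h1 : l * a₁ = 0 := by nlinarith [mul_nonneg hl0 ha₁, mul_nonneg hl1' ha₂]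
    have h2 : (1 - l) * a₂ = 0 := by nlinarith [mul_nonneg hl0 ha₁, mul_nonneg hl1' ha₂]
    have e1 : l * (a₁ * Real.log (a₁ / b₁)) = 0 := by
      rw [← mul_assoc, h1, zero_mul]
    have e2 : (1 - l) * (a₂ * Real.log (a₂ / b₂)) = 0 := by
      rw [← mul_assoc, h2, zero_mul]
    rw [← hA, zero_mul, e1, e2]; norm_num
  · -- a > 0
    have hb : 0 < b := by
      have hcases : 0 < l * a₁ ∨ 0 < (1 - l) * a₂ := by
        by_contra h
        push_neg at h
        nlinarith [mul_nonneg hl0 ha₁, mul_nonneg hl1' ha₂]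
      rcases hcases with h | h
      · have hlpos : 0 < l := by nlinarith
        have : 0 < a₁ := by nlinarith
        have := h₁ this
        nlinarith [mul_nonneg hl1' hb₂]
      · have hlpos : 0 < (1 - l) := by nlinarith
        have : 0 < a₂ := by nlinarith
        have := h₂ this
        nlinarith [mul_nonneg hl0 hb₁]
    -- per-term inequality: w * (aᵢ log(aᵢ/bᵢ)) ≥ w * aᵢ * log(a/b) + w * (aᵢ - a * bᵢ / b)
    have key : ∀ w ai bi : ℝ, 0 ≤ w → 0 ≤ ai → 0 ≤ bi → (0 < ai → 0 < bi) →
        w * ai * Real.log (a / b) + w * (ai - a * bi / b) ≤ w * (ai * Real.log (ai / bi)) := by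
      intro w ai bi hw hai hbi hib
      rcases eq_or_lt_of_le hw with hw0 | hw0
      · rw [← hw0]; simp
      rcases eq_or_lt_of_le hai with hai0 | hai0
      · rw [← hai0]; simp
        positivity
      · have hbi0 : 0 < bi := hib hai0
        have ht : 0 < ai * b / (bi * a) := by positivity
        have hlog : 1 - (bi * a) / (ai * b) ≤ Real.log (ai * b / (bi * a)) := by
          have := Real.log_le_sub_one_of_pos (show 0 < (bi * a) / (ai * b) by positivity)
          have hinv : Real.log ((bi * a) / (ai * b)) = - Real.log (ai * b / (bi * a)) := by
            rw [← Real.log_inv]; congr 1; field_simp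
          linarith [hinv ▸ this]
        have hsplit : Real.log (ai / bi) - Real.log (a / b) = Real.log (ai * b / (bi * a)) := by
          rw [Real.log_div (ne_of_gt hai0) (ne_of_gt hbi0),
            Real.log_div (ne_of_gt hA) (ne_of_gt hb),
            Real.log_div (by positivity) (by positivity),
            Real.log_mul (ne_of_gt hai0) (ne_of_gt hb),
            Real.log_mul (ne_of_gt hbi0) (ne_of_gt hA)]
          ring
        have haux : ai - a * bi / b ≤ ai * (Real.log (ai / bi) - Real.log (a / b)) := by
          rw [hsplit]
          have := mul_le_mul_of_nonneg_left hlog (le_of_lt hai0)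
          have hrw : ai * (1 - (bi * a) / (ai * b)) = ai - a * bi / b := by
            field_simp
          linarith [hrw ▸ this]
        have := mul_le_mul_of_nonneg_left haux (le_of_lt hw0)
        nlinarith
    have k1 := key l a₁ b₁ hl0 ha₁ hb₁ h₁
    have k2 := key (1 - l) a₂ b₂ hl1' ha₂ hb₂ h₂
    have hbb : a * (l * b₁ + (1 - l) * b₂) / b = a := by
      rw [← hb_def]; field_simp
    have hz : l * (a₁ - a * b₁ / b) + (1 - l) * (a₂ - a * b₂ / b) = 0 := by
      have h' : l * (a₁ - a * b₁ / b) + (1 - l) * (a₂ - a * b₂ / b) =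
          (l * a₁ + (1 - l) * a₂) - a * (l * b₁ + (1 - l) * b₂) / b := by ring
      rw [h', hbb, ← ha_def, sub_self]
    have haL : a * Real.log (a / b) =
        l * a₁ * Real.log (a / b) + (1 - l) * a₂ * Real.log (a / b) := by
      rw [ha_def]; ring
    linarith [k1, k2]

lemma outDist_isPMF {𝓧 : Type*} [Fintype 𝓧] {p : 𝓧 → ℝ} {K : 𝓧 → 𝓧 → ℝ}
    (hp : IsPMF p) (hK : IsKernel K) : IsPMF (outDist p K) := by
  constructor
  · intro y
    exact Finset.sum_nonneg fun x _ => mul_nonneg (hp.1 x) ((hK x).1 y)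
  · rw [show ∑ y, outDist p K y = ∑ y, ∑ x, p x * K x y from rfl, Finset.sum_comm]
    have : ∀ x ∈ Finset.univ, ∑ y, p x * K x y = p x := by
      intro x _
      rw [← Finset.mul_sum, (hK x).2, mul_one]
    rw [Finset.sum_congr rfl this, hp.2]

lemma outDist_mix {𝓧 : Type*} [Fintype 𝓧] (p : 𝓧 → ℝ) (K₁ K₂ : 𝓧 → 𝓧 → ℝ) (l : ℝ) :
    outDist p (fun x y => l * K₁ x y + (1 - l) * K₂ x y) =
      fun y => l * outDist p K₁ y + (1 - l) * outDist p K₂ y := by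
  funext y
  simp only [outDist, Finset.mul_sum, ← Finset.sum_add_distrib]
  congr 1; funext x; ring

lemma mutualInfo_mix_le {𝓧 : Type*} [Fintype 𝓧] {p : 𝓧 → ℝ} {K₁ K₂ : 𝓧 → 𝓧 → ℝ}
    (hp : IsPMF p) (hK₁ : IsKernel K₁) (hK₂ : IsKernel K₂) {l : ℝ}
    (hl0 : 0 ≤ l) (hl1 : l ≤ 1) :
    mutualInfo p (fun x y => l * K₁ x y + (1 - l) * K₂ x y) ≤
      l * mutualInfo p K₁ + (1 - l) * mutualInfo p K₂ := by
  unfold mutualInfo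
  rw [Finset.mul_sum, Finset.mul_sum, ← Finset.sum_add_distrib]
  apply Finset.sum_le_sum
  intro x _
  rw [Finset.mul_sum, Finset.mul_sum, ← Finset.sum_add_distrib]
  apply Finset.sum_le_sum
  intro y _
  rw [outDist_mix]
  rcases eq_or_lt_of_le (hp.1 x) with hpx | hpx
  · simp [← hpx]
  · have hq₁ : 0 < K₁ x y → 0 < outDist p K₁ y := by
      intro h
      have : p x * K₁ x y ≤ outDist p K₁ y :=
        Finset.single_le_sum (f := fun x' => p x' * K₁ x' y)
          (fun x' _ => mul_nonneg (hp.1 x') ((hK₁ x').1 y)) (Finset.mem_univ x)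
      nlinarith
    have hq₂ : 0 < K₂ x y → 0 < outDist p K₂ y := by
      intro h
      have : p x * K₂ x y ≤ outDist p K₂ y :=
        Finset.single_le_sum (f := fun x' => p x' * K₂ x' y)
          (fun x' _ => mul_nonneg (hp.1 x') ((hK₂ x').1 y)) (Finset.mem_univ x)
      nlinarith
    have hls := logsum_two (K₁ x y) (K₂ x y) (outDist p K₁ y) (outDist p K₂ y) l
      ((hK₁ x).1 y) ((hK₂ x).1 y)
      ((outDist_isPMF hp hK₁).1 y) ((outDist_isPMF hp hK₂).1 y) hq₁ hq₂ hl0 hl1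
    calc p x * (l * K₁ x y + (1 - l) * K₂ x y) *
          Real.log ((l * K₁ x y + (1 - l) * K₂ x y) /
            (l * outDist p K₁ y + (1 - l) * outDist p K₂ y))
        = p x * ((l * K₁ x y + (1 - l) * K₂ x y) *
            Real.log ((l * K₁ x y + (1 - l) * K₂ x y) /
              (l * outDist p K₁ y + (1 - l) * outDist p K₂ y))) := by ring
      _ ≤ p x * (l * (K₁ x y * Real.log (K₁ x y / outDist p K₁ y)) +
            (1 - l) * (K₂ x y * Real.log (K₂ x y / outDist p K₂ y))) :=
          mul_le_mul_of_nonneg_left hls (le_of_lt hpx)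
      _ = l * (p x * K₁ x y * Real.log (K₁ x y / outDist p K₁ y)) +
            (1 - l) * (p x * K₂ x y * Real.log (K₂ x y / outDist p K₂ y)) := by ring

/-- if the divergence d is convex in its second argument, then R(D,P) is
jointly convex in (D,P):
λ R(D₁,P₁) + (1−λ) R(D₂,P₂) ≥ R(λD₁+(1−λ)D₂, λP₁+(1−λ)P₂). -/
theorem rdp_convex {𝓧 : Type*} [Fintype 𝓧]
    (p : 𝓧 → ℝ) (hp : IsPMF p) (Δ : 𝓧 → 𝓧 → ℝ)
    (d : (𝓧 → ℝ) → (𝓧 → ℝ) → ℝ)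
    (hconv : ∀ (p₀ q₁ q₂ : 𝓧 → ℝ), IsPMF p₀ → IsPMF q₁ → IsPMF q₂ →
      ∀ l : ℝ, 0 ≤ l → l ≤ 1 →
        d p₀ (fun z => l * q₁ z + (1 - l) * q₂ z) ≤ l * d p₀ q₁ + (1 - l) * d p₀ q₂)
    (D₁ P₁ D₂ P₂ l : ℝ) (hl0 : 0 ≤ l) (hl1 : l ≤ 1) :
    RDP p Δ d (l * D₁ + (1 - l) * D₂) (l * P₁ + (1 - l) * P₂) ≤
      ENNReal.ofReal l * RDP p Δ d D₁ P₁ + ENNReal.ofReal (1 - l) * RDP p Δ d D₂ P₂ := by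
  -- main inequality for any pair of feasible points
  have main : ∀ r₁ ∈ { r : ℝ≥0∞ | ∃ K : 𝓧 → 𝓧 → ℝ, IsKernel K ∧ expDistortion p Δ K ≤ D₁ ∧
        d p (outDist p K) ≤ P₁ ∧ r = ENNReal.ofReal (mutualInfo p K) },
      ∀ r₂ ∈ { r : ℝ≥0∞ | ∃ K : 𝓧 → 𝓧 → ℝ, IsKernel K ∧ expDistortion p Δ K ≤ D₂ ∧
        d p (outDist p K) ≤ P₂ ∧ r = ENNReal.ofReal (mutualInfo p K) },
      RDP p Δ d (l * D₁ + (1 - l) * D₂) (l * P₁ + (1 - l) * P₂) ≤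
        ENNReal.ofReal l * r₁ + ENNReal.ofReal (1 - l) * r₂ := by
    rintro r₁ ⟨K₁, hK₁, hD₁, hP₁, rfl⟩ r₂ ⟨K₂, hK₂, hD₂, hP₂, rfl⟩
    have hl1' : 0 ≤ 1 - l := by linarith
    set K : 𝓧 → 𝓧 → ℝ := fun x y => l * K₁ x y + (1 - l) * K₂ x y with hK_def
    have hK : IsKernel K := by
      intro x
      constructor
      · intro y
        exact add_nonneg (mul_nonneg hl0 ((hK₁ x).1 y)) (mul_nonneg hl1' ((hK₂ x).1 y))
      · simp only [hK_def]
        rw [Finset.sum_add_distrib, ← Finset.mul_sum, ← Finset.mul_sum,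
          (hK₁ x).2, (hK₂ x).2]
        ring
    have hED : expDistortion p Δ K ≤ l * D₁ + (1 - l) * D₂ := by
      have : expDistortion p Δ K = l * expDistortion p Δ K₁ + (1 - l) * expDistortion p Δ K₂ := by
        unfold expDistortion
        rw [Finset.mul_sum, Finset.mul_sum, ← Finset.sum_add_distrib]
        apply Finset.sum_congr rfl
        intro x _
        rw [Finset.mul_sum, Finset.mul_sum, ← Finset.sum_add_distrib]
        apply Finset.sum_congr rfl
        intro y _
        simp only [hK_def]; ring
      rw [this]
      exact add_le_add (mul_le_mul_of_nonneg_left hD₁ hl0)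
        (mul_le_mul_of_nonneg_left hD₂ hl1')
    have hPd : d p (outDist p K) ≤ l * P₁ + (1 - l) * P₂ := by
      have h1 : outDist p K = fun y => l * outDist p K₁ y + (1 - l) * outDist p K₂ y :=
        outDist_mix p K₁ K₂ l
      rw [h1]
      calc d p (fun y => l * outDist p K₁ y + (1 - l) * outDist p K₂ y)
          ≤ l * d p (outDist p K₁) + (1 - l) * d p (outDist p K₂) :=
            hconv p _ _ hp (outDist_isPMF hp hK₁) (outDist_isPMF hp hK₂) l hl0 hl1
        _ ≤ l * P₁ + (1 - l) * P₂ :=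
            add_le_add (mul_le_mul_of_nonneg_left hP₁ hl0)
              (mul_le_mul_of_nonneg_left hP₂ hl1')
    have hmem : ENNReal.ofReal (mutualInfo p K) ∈
        { r : ℝ≥0∞ | ∃ K' : 𝓧 → 𝓧 → ℝ, IsKernel K' ∧
          expDistortion p Δ K' ≤ l * D₁ + (1 - l) * D₂ ∧
          d p (outDist p K') ≤ l * P₁ + (1 - l) * P₂ ∧
          r = ENNReal.ofReal (mutualInfo p K') } := ⟨K, hK, hED, hPd, rfl⟩
    calc RDP p Δ d (l * D₁ + (1 - l) * D₂) (l * P₁ + (1 - l) * P₂)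
        ≤ ENNReal.ofReal (mutualInfo p K) := sInf_le hmem
      _ ≤ ENNReal.ofReal (l * mutualInfo p K₁ + (1 - l) * mutualInfo p K₂) :=
          ENNReal.ofReal_le_ofReal (mutualInfo_mix_le hp hK₁ hK₂ hl0 hl1)
      _ ≤ ENNReal.ofReal (l * mutualInfo p K₁) + ENNReal.ofReal ((1 - l) * mutualInfo p K₂) :=
          ENNReal.ofReal_add_le
      _ = ENNReal.ofReal l * ENNReal.ofReal (mutualInfo p K₁) +
            ENNReal.ofReal (1 - l) * ENNReal.ofReal (mutualInfo p K₂) := by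
          rw [ENNReal.ofReal_mul hl0, ENNReal.ofReal_mul hl1']
  -- now go from pairs to the infima
  set S₁ := { r : ℝ≥0∞ | ∃ K : 𝓧 → 𝓧 → ℝ, IsKernel K ∧ expDistortion p Δ K ≤ D₁ ∧
      d p (outDist p K) ≤ P₁ ∧ r = ENNReal.ofReal (mutualInfo p K) } with hS₁
  set S₂ := { r : ℝ≥0∞ | ∃ K : 𝓧 → 𝓧 → ℝ, IsKernel K ∧ expDistortion p Δ K ≤ D₂ ∧
      d p (outDist p K) ≤ P₂ ∧ r = ENNReal.ofReal (mutualInfo p K) } with hS₂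
  have hR₁ : RDP p Δ d D₁ P₁ = sInf S₁ := rfl
  have hR₂ : RDP p Δ d D₂ P₂ = sInf S₂ := rfl
  rw [hR₁, hR₂]
  rcases eq_or_lt_of_le hl0 with h0 | h0
  · -- l = 0
    have : l = 0 := h0.symm
    subst this
    simp only [ENNReal.ofReal_zero, zero_mul, zero_add, sub_zero, ENNReal.ofReal_one, one_mul]
    exact le_of_eq hR₂
  rcases eq_or_lt_of_le hl1 with h1 | h1
  · -- l = 1
    subst h1
    simp only [sub_self, ENNReal.ofReal_zero, zero_mul, add_zero, ENNReal.ofReal_one, one_mul]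
    exact le_of_eq hR₁
  -- 0 < l < 1
  have hc₁0 : ENNReal.ofReal l ≠ 0 := by simp [ENNReal.ofReal_eq_zero]; linarith
  have hc₂0 : ENNReal.ofReal (1 - l) ≠ 0 := by simp [ENNReal.ofReal_eq_zero]; linarith
  rcases Set.eq_empty_or_nonempty S₁ with hE₁ | hne₁
  · rw [hE₁]
    simp only [sInf_empty]
    rw [ENNReal.mul_top hc₁0]
    simp
  rcases Set.eq_empty_or_nonempty S₂ with hE₂ | hne₂
  · rw [hE₂]
    simp only [sInf_empty]
    rw [ENNReal.mul_top hc₂0]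
    simp
  have hne₁' : Nonempty S₁ := hne₁.to_subtype
  have hne₂' : Nonempty S₂ := hne₂.to_subtype
  rw [sInf_eq_iInf' S₁, sInf_eq_iInf' S₂,
    ENNReal.mul_iInf_of_ne hc₁0 ENNReal.ofReal_ne_top,
    ENNReal.mul_iInf_of_ne hc₂0 ENNReal.ofReal_ne_top,
    ENNReal.iInf_add]
  refine le_iInf fun r₁ => ?_
  rw [ENNReal.add_iInf]
  refine le_iInf fun r₂ => ?_
  exact main r₁ r₁.2 r₂ r₂.2
end

section
/- Suppose the function k(z) = E_{X∼p_X}[Δ(X,z)] does not attain its minimum at every point of the support of p_X. Then R(·,0) ≠ R(·,∞): there exists a distortion level D0 with R(D0,0) > R(D0,∞). Concretely, at D* = min_{p_{X̂}} E_{X̂∼p_{X̂}} [k(X̂)], any distribution p_{X̂} independent of X achieving distortion D* must be supported in S = argmin_z k(z), so it cannot equal p_X; hence zero rate with perfect perceptual quality is impossible at distortion D*. -/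
open scoped BigOperators ENNReal

/- ### Auxiliary lemmas -/

lemma phi_strictMono' : StrictMonoOn (fun t : ℝ => Real.log t - t) (Set.Ioc 0 1) := by
  apply strictMonoOn_of_deriv_pos (convex_Ioc 0 1)
  · exact (Real.continuousOn_log.mono (by intro x hx; exact ne_of_gt hx.1)).sub continuousOn_id
  · intro x hx
    rw [interior_Ioc] at hx
    have hx0 : x ≠ 0 := ne_of_gt hx.1
    have hd : HasDerivAt (fun t : ℝ => Real.log t - t) (x⁻¹ - 1) x :=
      (Real.hasDerivAt_log hx0).sub (hasDerivAt_id x)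
    rw [hd.deriv]
    have : (1:ℝ) < x⁻¹ := (one_lt_inv₀ hx.1).2 hx.2
    linarith

/-- Key pointwise inequality: `a log(a/b) ≥ (a-b) + (a-b)²/2` for `a, b ∈ [0,1]`
(with `a = 0` whenever `b = 0`). -/
lemma key_log_ineq (a b : ℝ) (ha0 : 0 ≤ a) (ha1 : a ≤ 1) (hb0 : 0 ≤ b) (hb1 : b ≤ 1)
    (hab : b = 0 → a = 0) :
    (a - b) + (a - b)^2 / 2 ≤ a * Real.log (a / b) := by
  rcases eq_or_lt_of_le ha0 with h0 | ha0'
  · rw [← h0]; simp; nlinarith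
  have hb0' : 0 < b := by
    rcases eq_or_lt_of_le hb0 with h | h
    · have := hab h.symm; linarith
    · exact h
  set f : ℝ → ℝ := fun t => t * Real.log t - t * Real.log b - (t - b) - (t - b)^2 / 2 with hf
  have hfb : f b = 0 := by simp [hf]
  have hderiv : ∀ t : ℝ, 0 < t → HasDerivAt f (Real.log t - Real.log b - (t - b)) t := by
    intro t ht
    have h1 := (Real.hasDerivAt_mul_log (ne_of_gt ht)).sub
      ((hasDerivAt_id t).mul_const (Real.log b))
    have h2 := (h1.sub ((hasDerivAt_id t).sub_const b))
    have h3 := h2.sub ((((hasDerivAt_id t).sub_const b).pow 2).div_const 2)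
    exact h3.congr_deriv (by simp only [id_eq, show (2:ℕ) - 1 = 1 from rfl, pow_one]; ring)
  have hcont : Continuous f := by
    apply (((Real.continuous_mul_log).sub (continuous_id.mul continuous_const)).sub
      (continuous_id.sub continuous_const)).sub
      (((continuous_id.sub continuous_const).pow 2).div_const 2)
  have hfa : 0 ≤ f a := by
    rcases lt_trichotomy a b with h | h | h
    · obtain ⟨c, hc, hceq⟩ := exists_hasDerivAt_eq_slope f
        (fun t => Real.log t - Real.log b - (t - b)) h hcont.continuousOn
        (fun x hx => hderiv x (lt_trans ha0' hx.1))
      have hc1 : c ∈ Set.Ioc (0:ℝ) 1 := ⟨lt_trans ha0' hc.1, le_of_lt (lt_of_lt_of_le hc.2 hb1)⟩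
      have hb1' : b ∈ Set.Ioc (0:ℝ) 1 := ⟨hb0', hb1⟩
      have := phi_strictMono' hc1 hb1' hc.2
      have hfc : Real.log c - Real.log b - (c - b) < 0 := by simp at this ⊢; linarith
      rw [hfb] at hceq
      have hba : 0 < b - a := by linarith
      rw [eq_div_iff (ne_of_gt hba)] at hceq
      nlinarith [mul_neg_of_neg_of_pos hfc hba]
    · subst h; rw [hfb]
    · obtain ⟨c, hc, hceq⟩ := exists_hasDerivAt_eq_slope f
        (fun t => Real.log t - Real.log b - (t - b)) h hcont.continuousOn
        (fun x hx => hderiv x (lt_trans hb0' hx.1))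
      have hc1 : c ∈ Set.Ioc (0:ℝ) 1 := ⟨lt_trans hb0' hc.1, le_of_lt (lt_of_lt_of_le hc.2 ha1)⟩
      have hb1' : b ∈ Set.Ioc (0:ℝ) 1 := ⟨hb0', hb1⟩
      have := phi_strictMono' hb1' hc1 hc.1
      have hfc : 0 < Real.log c - Real.log b - (c - b) := by simp at this ⊢; linarith
      rw [hfb] at hceq
      have hab' : 0 < a - b := by linarith
      rw [eq_div_iff (ne_of_gt hab')] at hceq
      nlinarith [mul_pos hfc hab']
  have : a * Real.log (a / b) = a * Real.log a - a * Real.log b := by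
    rw [Real.log_div (ne_of_gt ha0') (ne_of_gt hb0')]; ring
  rw [this]
  simp only [hf] at hfa
  linarith

lemma pmf_le_one {𝓧 : Type*} [Fintype 𝓧] {p : 𝓧 → ℝ} (hp : IsPMF p) (x : 𝓧) : p x ≤ 1 := by
  rw [← hp.2]
  exact Finset.single_le_sum (fun i _ => hp.1 i) (Finset.mem_univ x)

/-- Quadratic lower bound on mutual information when the output distribution equals `p`. -/
lemma mi_ge_half_Q {𝓧 : Type*} [Fintype 𝓧] (p : 𝓧 → ℝ) (hp : IsPMF p)
    (K : 𝓧 → 𝓧 → ℝ) (hK : IsKernel K) (hout : outDist p K = p) :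
    (∑ x, ∑ y, p x * (K x y - p y)^2) / 2 ≤ mutualInfo p K := by
  have hzero : ∀ x y, 0 < p x → p y = 0 → K x y = 0 := by
    intro x y hpx hpy
    have hsum : ∑ x', p x' * K x' y = 0 := by
      have := congrFun hout y
      simpa [outDist, hpy] using this
    have hterm : p x * K x y = 0 := by
      have h := (Finset.sum_eq_zero_iff_of_nonneg
        (fun i _ => mul_nonneg (hp.1 i) ((hK i).1 y))).1 hsum x (Finset.mem_univ x)
      exact h
    exact (mul_eq_zero.1 hterm).resolve_left (ne_of_gt hpx)
  have step : ∀ x y, p x * ((K x y - p y) + (K x y - p y)^2 / 2)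
      ≤ p x * K x y * Real.log (K x y / p y) := by
    intro x y
    rcases eq_or_lt_of_le (hp.1 x) with h | h
    · rw [← h]; simp
    · rw [mul_assoc]
      refine mul_le_mul_of_nonneg_left ?_ (hp.1 x)
      exact key_log_ineq (K x y) (p y) ((hK x).1 y) (pmf_le_one (hK x) y)
        (hp.1 y) (pmf_le_one hp y) (fun hy => hzero x y h hy)
  have hmi : mutualInfo p K = ∑ x, ∑ y, p x * K x y * Real.log (K x y / p y) := by
    unfold mutualInfo; rw [hout]
  rw [hmi]
  have h1 : ∑ x, ∑ y, p x * ((K x y - p y) + (K x y - p y)^2 / 2)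
      ≤ ∑ x, ∑ y, p x * K x y * Real.log (K x y / p y) :=
    Finset.sum_le_sum (fun x _ => Finset.sum_le_sum (fun y _ => step x y))
  refine le_trans (le_of_eq ?_) h1
  have h2 : ∀ x : 𝓧, ∑ y, p x * ((K x y - p y) + (K x y - p y)^2 / 2)
      = ∑ y, p x * (K x y - p y)^2 / 2 := by
    intro x
    have : ∑ y, p x * (K x y - p y) = 0 := by
      rw [← Finset.mul_sum, Finset.sum_sub_distrib, (hK x).2, hp.2]
      ring
    calc ∑ y, p x * ((K x y - p y) + (K x y - p y)^2 / 2)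
        = (∑ y, p x * (K x y - p y)) + ∑ y, p x * (K x y - p y)^2 / 2 := by
          rw [← Finset.sum_add_distrib]; apply Finset.sum_congr rfl; intro y _; ring
      _ = ∑ y, p x * (K x y - p y)^2 / 2 := by rw [this, zero_add]
  rw [Finset.sum_div]
  apply Finset.sum_congr rfl
  intro x _
  rw [h2, Finset.sum_div]

/-- Distortion-gap chain: if the expected distortion is at most the minimum `Ds` of
`k(z) = ∑ₓ p x Δ(x,z)` but the output distribution is `p` itself, then the total
deviation of `K` from `p` is bounded below. -/
lemma eps_chain {𝓧 : Type*} [Fintype 𝓧] (p : 𝓧 → ℝ) (hp : IsPMF p)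
    (Δ : 𝓧 → 𝓧 → ℝ) (hΔnn : ∀ x y, 0 ≤ Δ x y) (M : ℝ) (hM : ∀ x y, Δ x y ≤ M)
    (K : 𝓧 → 𝓧 → ℝ)
    (Ds : ℝ) (hmin : ∀ z, Ds ≤ ∑ x, p x * Δ x z)
    (hdist : expDistortion p Δ K ≤ Ds) (z₀ : 𝓧) :
    p z₀ * ((∑ x, p x * Δ x z₀) - Ds) ≤ M * ∑ x, ∑ y, p x * |K x y - p y| := by
  set k : 𝓧 → ℝ := fun z => ∑ x, p x * Δ x z with hk
  have e1 : Ds + p z₀ * (k z₀ - Ds) ≤ ∑ x, ∑ y, p x * p y * Δ x y := by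
    have swap : ∑ x, ∑ y, p x * p y * Δ x y = ∑ y, p y * k y := by
      rw [Finset.sum_comm]
      apply Finset.sum_congr rfl
      intro y _
      rw [hk, Finset.mul_sum]
      apply Finset.sum_congr rfl
      intro x _; ring
    rw [swap]
    have : ∑ y, p y * k y = Ds + ∑ y, p y * (k y - Ds) := by
      have : ∑ y, p y * (k y - Ds) = (∑ y, p y * k y) - Ds * ∑ y, p y := by
        rw [Finset.mul_sum, ← Finset.sum_sub_distrib]
        apply Finset.sum_congr rfl
        intro y _; ring
      rw [this, hp.2]; ring
    rw [this]
    have hsingle : p z₀ * (k z₀ - Ds) ≤ ∑ y, p y * (k y - Ds) :=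
      Finset.single_le_sum (f := fun y => p y * (k y - Ds))
        (fun y _ => mul_nonneg (hp.1 y) (by simp only [hk]; linarith [hmin y]))
        (Finset.mem_univ z₀)
    linarith
  have e2 : ∑ x, ∑ y, p x * p y * Δ x y - expDistortion p Δ K
      ≤ M * ∑ x, ∑ y, p x * |K x y - p y| := by
    unfold expDistortion
    rw [← Finset.sum_sub_distrib, Finset.mul_sum]
    apply Finset.sum_le_sum
    intro x _
    rw [← Finset.sum_sub_distrib, Finset.mul_sum]
    apply Finset.sum_le_sum
    intro y _
    have h1 : p y - K x y ≤ |K x y - p y| := by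
      rw [abs_sub_comm]; exact le_abs_self _
    have h2 : 0 ≤ |K x y - p y| := abs_nonneg _
    have h3 := hΔnn x y
    have h4 := hM x y
    have h5 := hp.1 x
    have hM0 : 0 ≤ M := le_trans h3 h4
    calc p x * p y * Δ x y - p x * K x y * Δ x y = p x * ((p y - K x y) * Δ x y) := by ring
      _ ≤ p x * (|K x y - p y| * M) := by
          refine mul_le_mul_of_nonneg_left ?_ h5
          rcases le_or_gt (p y - K x y) 0 with h | h
          · nlinarith
          · nlinarith
      _ = M * (p x * |K x y - p y|) := by ring
  linarith

/-- Cauchy–Schwarz chain: `T² ≤ n·Q`. -/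
lemma cs_chain {𝓧 : Type*} [Fintype 𝓧] (p : 𝓧 → ℝ) (hp : IsPMF p) (K : 𝓧 → 𝓧 → ℝ) :
    (∑ x, ∑ y, p x * |K x y - p y|)^2
      ≤ (Fintype.card 𝓧 : ℝ) * ∑ x, ∑ y, p x * (K x y - p y)^2 := by
  have key := Finset.sum_mul_sq_le_sq_mul_sq (Finset.univ ×ˢ Finset.univ)
    (fun z : 𝓧 × 𝓧 => Real.sqrt (p z.1))
    (fun z : 𝓧 × 𝓧 => Real.sqrt (p z.1) * |K z.1 z.2 - p z.2|)
  have h1 : ∑ z ∈ Finset.univ ×ˢ Finset.univ,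
      Real.sqrt (p z.1) * (Real.sqrt (p z.1) * |K z.1 z.2 - p z.2|)
      = ∑ x, ∑ y, p x * |K x y - p y| := by
    rw [Finset.sum_product]
    apply Finset.sum_congr rfl; intro x _
    apply Finset.sum_congr rfl; intro y _
    rw [← mul_assoc, Real.mul_self_sqrt (hp.1 x)]
  have h2 : ∑ z ∈ (Finset.univ ×ˢ Finset.univ : Finset (𝓧 × 𝓧)), (Real.sqrt (p z.1))^2
      = (Fintype.card 𝓧 : ℝ) := by
    rw [Finset.sum_product]
    have h2' : ∀ x : 𝓧, (∑ y : 𝓧, (Real.sqrt (p x))^2) = (Fintype.card 𝓧 : ℝ) * p x := by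
      intro x
      rw [Finset.sum_const, Real.sq_sqrt (hp.1 x), Finset.card_univ, nsmul_eq_mul]
    rw [Finset.sum_congr rfl (fun x _ => h2' x), ← Finset.mul_sum, hp.2, mul_one]
  have h3 : ∑ z ∈ Finset.univ ×ˢ Finset.univ,
      (Real.sqrt (p z.1) * |K z.1 z.2 - p z.2|)^2
      = ∑ x, ∑ y, p x * (K x y - p y)^2 := by
    rw [Finset.sum_product]
    apply Finset.sum_congr rfl; intro x _
    apply Finset.sum_congr rfl; intro y _
    rw [mul_pow, Real.sq_sqrt (hp.1 x), sq_abs]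
  rw [h1, h2, h3] at key
  exact key

/-- if k(z) = E[Δ(X,z)] does not attain its minimum at every point of the
support of p_X, then R(·,0) ≠ R(·,∞): there is a distortion level D₀ with
R(D₀,0) > R(D₀,∞). -/
theorem rdp_perfect_perception_strictly_above {𝓧 : Type*} [Fintype 𝓧] [Nonempty 𝓧]
    (p : 𝓧 → ℝ) (hp : IsPMF p)
    (Δ : 𝓧 → 𝓧 → ℝ) (hΔnn : ∀ x y, 0 ≤ Δ x y) (hΔ0 : ∀ x y, Δ x y = 0 ↔ x = y)
    (d : (𝓧 → ℝ) → (𝓧 → ℝ) → ℝ)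
    (hdnn : ∀ q : 𝓧 → ℝ, IsPMF q → 0 ≤ d p q)
    (hd0 : ∀ q : 𝓧 → ℝ, IsPMF q → (d p q = 0 ↔ p = q))
    (hA2 : ∃ z, 0 < p z ∧ ∃ w, (∑ x, p x * Δ x w) < (∑ x, p x * Δ x z)) :
    ∃ D₀ : ℝ, RDPinf p Δ D₀ < RDP p Δ d D₀ 0 := by
  classical
  obtain ⟨z₀, hz₀, w₀, hw₀⟩ := hA2
  obtain ⟨z', _, hz'min⟩ := Finset.exists_min_image Finset.univ
    (fun z => ∑ x, p x * Δ x z) ⟨Classical.arbitrary 𝓧, Finset.mem_univ _⟩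
  have hmin : ∀ z, (∑ x, p x * Δ x z') ≤ ∑ x, p x * Δ x z :=
    fun z => hz'min z (Finset.mem_univ z)
  have hgap : (∑ x, p x * Δ x z') < ∑ x, p x * Δ x z₀ := lt_of_le_of_lt (hmin w₀) hw₀
  refine ⟨∑ x, p x * Δ x z', ?_⟩
  -- RDPinf at this distortion level is 0, witnessed by the deterministic kernel to z'
  have hinf : RDPinf p Δ (∑ x, p x * Δ x z') ≤ 0 := by
    apply sInf_le
    refine ⟨fun _ y => if y = z' then (1:ℝ) else 0, ?_, ?_, ?_⟩
    · intro x
      constructor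
      · intro y; dsimp; split <;> norm_num
      · simp
    · simp [expDistortion, mul_ite, ite_mul, Finset.sum_ite_eq']
    · have hout : ∀ y, outDist p (fun (_ y : 𝓧) => if y = z' then (1:ℝ) else 0) y
          = if y = z' then 1 else 0 := by
        intro y
        simp only [outDist, mul_ite, mul_one, mul_zero]
        split <;> simp [hp.2]
      have hmi0 : mutualInfo p (fun (_ y : 𝓧) => if y = z' then (1:ℝ) else 0) = 0 := by
        unfold mutualInfo
        apply Finset.sum_eq_zero
        intro x _
        apply Finset.sum_eq_zero
        intro y _
        rw [hout]
        by_cases hy : y = z' <;> simp [hy]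
      rw [hmi0]
      simp
  -- constants
  set M : ℝ := 1 + ∑ x, ∑ y, Δ x y with hMdef
  have hsumnn : (0:ℝ) ≤ ∑ x, ∑ y, Δ x y :=
    Finset.sum_nonneg (fun x _ => Finset.sum_nonneg (fun y _ => hΔnn x y))
  have hM1 : (1:ℝ) ≤ M := by simp only [hMdef]; linarith
  have hM : ∀ x y, Δ x y ≤ M := by
    intro x y
    have h1 : Δ x y ≤ ∑ y', Δ x y' :=
      Finset.single_le_sum (fun i _ => hΔnn x i) (Finset.mem_univ y)
    have h2 : (∑ y', Δ x y') ≤ ∑ x', ∑ y', Δ x' y' :=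
      Finset.single_le_sum (f := fun x' => ∑ y', Δ x' y')
        (fun i _ => Finset.sum_nonneg (fun j _ => hΔnn i j)) (Finset.mem_univ x)
    simp only [hMdef]; linarith
  set n : ℝ := (Fintype.card 𝓧 : ℝ) with hndef
  have hn : 0 < n := by
    simp only [hndef]
    exact_mod_cast Fintype.card_pos
  set ε : ℝ := p z₀ * ((∑ x, p x * Δ x z₀) - ∑ x, p x * Δ x z') with hεdef
  have hε : 0 < ε := mul_pos hz₀ (by linarith)
  set c : ℝ := ε^2 / (2 * M^2 * n) with hcdef
  have hMpos : (0:ℝ) < M := lt_of_lt_of_le one_pos hM1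
  have hc : 0 < c := by
    apply div_pos (pow_pos hε 2)
    positivity
  -- the RDP side is bounded below by c
  have hrdp : ENNReal.ofReal c ≤ RDP p Δ d (∑ x, p x * Δ x z') 0 := by
    apply le_sInf
    rintro r ⟨K, hK, hdist, hperc, rfl⟩
    apply ENNReal.ofReal_le_ofReal
    have hoPMF : IsPMF (outDist p K) := by
      constructor
      · intro y
        exact Finset.sum_nonneg (fun x _ => mul_nonneg (hp.1 x) ((hK x).1 y))
      · unfold outDist
        rw [Finset.sum_comm]
        have : ∀ x : 𝓧, (∑ y, p x * K x y) = p x := by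
          intro x
          rw [← Finset.mul_sum, (hK x).2, mul_one]
        rw [Finset.sum_congr rfl (fun x _ => this x), hp.2]
    have hdzero : d p (outDist p K) = 0 := le_antisymm hperc (hdnn _ hoPMF)
    have hout : outDist p K = p := ((hd0 _ hoPMF).1 hdzero).symm
    have hQmi := mi_ge_half_Q p hp K hK hout
    have hT := eps_chain p hp Δ hΔnn M hM K (∑ x, p x * Δ x z') hmin hdist z₀
    have hCS := cs_chain p hp K
    set T : ℝ := ∑ x, ∑ y, p x * |K x y - p y| with hTdef
    set Q : ℝ := ∑ x, ∑ y, p x * (K x y - p y)^2 with hQdef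
    have hT0 : 0 ≤ T :=
      Finset.sum_nonneg (fun x _ => Finset.sum_nonneg
        (fun y _ => mul_nonneg (hp.1 x) (abs_nonneg _)))
    have hεT : ε ≤ M * T := hT
    show c ≤ mutualInfo p K
    rw [hcdef, div_le_iff₀ (by positivity)]
    have hQ0 : 0 ≤ Q :=
      Finset.sum_nonneg (fun x _ => Finset.sum_nonneg
        (fun y _ => mul_nonneg (hp.1 x) (sq_nonneg _)))
    have f1 : ε * ε ≤ (M * T) * (M * T) :=
      mul_le_mul hεT hεT (le_of_lt hε) (by positivity)
    have f2 : M^2 * T^2 ≤ M^2 * (n * Q) :=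
      mul_le_mul_of_nonneg_left hCS (sq_nonneg M)
    have f3 : Q ≤ 2 * mutualInfo p K := by linarith
    have f4 : M^2 * (n * Q) ≤ M^2 * (n * (2 * mutualInfo p K)) :=
      mul_le_mul_of_nonneg_left (mul_le_mul_of_nonneg_left f3 hn.le) (sq_nonneg M)
    nlinarith
  calc RDPinf p Δ (∑ x, p x * Δ x z') ≤ 0 := hinf
    _ < ENNReal.ofReal c := ENNReal.ofReal_pos.2 hc
    _ ≤ RDP p Δ d (∑ x, p x * Δ x z') 0 := hrdp
end

section
/- Let X, X̂, X̃ be random variables such that X̃ is conditionally independent of X given X̂, the conditional distribution of X̃ given X̂ equals the conditional distribution of X given X̂, and X̂ = E[X | X̂] almost surely. Then E[‖X − X̃‖²] = 2 E[‖X − X̂‖²]. -/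
open MeasureTheory ProbabilityTheory
open scoped ENNReal

open scoped InnerProductSpace

lemma sq_int {α E : Type*} [MeasurableSpace α] [NormedAddCommGroup E] {μ : Measure α}
    {f : α → E} (hf : MemLp f 2 μ) : Integrable (fun x => ‖f x‖ ^ 2) μ := by
  have := hf.integrable_norm_rpow two_ne_zero ENNReal.ofNat_ne_top
  simpa [ENNReal.toReal_ofNat, Real.rpow_natCast 2] using this

lemma double_integral_dist_sq {E : Type*} [NormedAddCommGroup E] [InnerProductSpace ℝ E]
    [CompleteSpace E] [MeasurableSpace E] [BorelSpace E] [SecondCountableTopology E]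
    (p : Measure E) [IsProbabilityMeasure p]
    (h2 : Integrable (fun x => ‖x‖ ^ 2) p) (b : E) (hb : ∫ x, x ∂p = b) :
    ∫ x, ∫ y, ‖x - y‖ ^ 2 ∂p ∂p = 2 * ∫ x, ‖x - b‖ ^ 2 ∂p := by
  have hid : Integrable (fun x : E => x) p := by
    have h : MemLp (id : E → E) 2 p :=
      (memLp_two_iff_integrable_sq_norm aestronglyMeasurable_id).mpr h2
    exact h.integrable one_le_two
  have hinner : ∀ c : E, Integrable (fun x => ⟪c, x⟫_ℝ) p := fun c => hid.const_inner c
  have key : ∀ (c : E) (C : ℝ), ∫ x, (‖x‖ ^ 2 - 2 * ⟪c, x⟫_ℝ + C) ∂p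
      = (∫ x, ‖x‖ ^ 2 ∂p) - 2 * ⟪c, b⟫_ℝ + C := by
    intro c C
    have h1 : Integrable (fun x => ‖x‖ ^ 2 - 2 * ⟪c, x⟫_ℝ) p := by
      exact h2.sub ((hinner c).const_mul 2)
    have h3 : Integrable (fun x => 2 * ⟪c, x⟫_ℝ) p := by exact (hinner c).const_mul 2
    rw [integral_add h1 (integrable_const C), integral_sub h2 h3,
      integral_const_mul, integral_inner hid, hb, integral_const]
    simp
  have hM : ∀ x : E, ∫ y, ‖x - y‖ ^ 2 ∂p = ‖x‖ ^ 2 - 2 * ⟪x, b⟫_ℝ + ∫ y, ‖y‖ ^ 2 ∂p := by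
    intro x
    have h : ∀ y : E, ‖x - y‖ ^ 2 = ‖y‖ ^ 2 - 2 * ⟪x, y⟫_ℝ + ‖x‖ ^ 2 := by
      intro y; rw [norm_sub_sq_real]; ring
    rw [integral_congr_ae (Filter.Eventually.of_forall h), key x (‖x‖ ^ 2)]
    ring
  rw [integral_congr_ae (Filter.Eventually.of_forall hM)]
  have hM2 : ∀ x : E, ‖x - b‖ ^ 2 = ‖x‖ ^ 2 - 2 * ⟪b, x⟫_ℝ + ‖b‖ ^ 2 := by
    intro x; rw [norm_sub_sq_real, real_inner_comm]
  rw [integral_congr_ae (Filter.Eventually.of_forall hM2), key b (‖b‖ ^ 2),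
    real_inner_self_eq_norm_sq]
  have hM3 : ∀ x : E, ‖x‖ ^ 2 - 2 * ⟪x, b⟫_ℝ + ∫ y, ‖y‖ ^ 2 ∂p
      = ‖x‖ ^ 2 - 2 * ⟪b, x⟫_ℝ + ∫ y, ‖y‖ ^ 2 ∂p := by
    intro x; rw [real_inner_comm]
  rw [integral_congr_ae (Filter.Eventually.of_forall hM3), key b (∫ y, ‖y‖ ^ 2 ∂p),
    real_inner_self_eq_norm_sq]
  ring

/-- if X̃ is conditionally independent of X given X̂, the conditional
distribution of X̃ given X̂ equals that of X given X̂, and X̂ = E[X | X̂] a.s., then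
E‖X − X̃‖² = 2 E‖X − X̂‖². -/
theorem expected_sq_error_posterior_sampling
    {Ω : Type*} [MeasurableSpace Ω] [StandardBorelSpace Ω] [Nonempty Ω]
    {μ : Measure Ω} [IsProbabilityMeasure μ] {n : ℕ}
    (X Xh Xt : Ω → EuclideanSpace ℝ (Fin n))
    (hX : Measurable X) (hXh : Measurable Xh) (hXt : Measurable Xt)
    (hX2 : MemLp X 2 μ) (hXh2 : MemLp Xh 2 μ) (hXt2 : MemLp Xt 2 μ)
    -- X̃ is conditionally independent of X given X̂:
    (hci : CondIndepFun (MeasurableSpace.comap Xh inferInstance) (hXh.comap_le) X Xt μ)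
    -- the conditional distribution of X̃ given X̂ equals that of X given X̂:
    (hcd : condDistrib Xt Xh μ = condDistrib X Xh μ)
    -- X̂ = E[X | X̂] almost surely:
    (hmean : Xh =ᵐ[μ] μ[X | MeasurableSpace.comap Xh inferInstance]) :
    ∫ ω, ‖X ω - Xt ω‖ ^ 2 ∂μ = 2 * ∫ ω, ‖X ω - Xh ω‖ ^ 2 ∂μ := by
  set κ := condDistrib X Xh μ with hκ
  set ν := μ.map Xh with hν
  have hνprob : IsProbabilityMeasure ν := Measure.isProbabilityMeasure_map hXh.aemeasurable
  -- pair law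
  have hpairprob : IsProbabilityMeasure (μ.map (fun ω => (Xh ω, X ω))) :=
    Measure.isProbabilityMeasure_map (hXh.prodMk hX).aemeasurable
  have hJ2 : μ.map (fun ω => (Xh ω, X ω)) = ν ⊗ₘ κ := by
    have h1 := (μ.map (fun ω => (Xh ω, X ω))).disintegrate (μ.map (fun ω => (Xh ω, X ω))).condKernel
    rw [hν, hκ, condDistrib, ← Measure.fst_map_prodMk₀ (X := Xh) (Y := X) hX.aemeasurable]
    exact h1.symm
  -- triple law
  have hT : Measurable (fun ω => (Xh ω, (X ω, Xt ω))) := hXh.prodMk (hX.prodMk hXt)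
  have hJ : μ.map (fun ω => (Xh ω, (X ω, Xt ω))) = ν ⊗ₘ (κ ×ₖ κ) := by
    have hmapprob : IsProbabilityMeasure (μ.map (fun ω => (Xh ω, (X ω, Xt ω)))) :=
      Measure.isProbabilityMeasure_map hT.aemeasurable
    refine MeasureTheory.ext_of_generate_finite _
      (generateFrom_eq_prod MeasurableSpace.generateFrom_measurableSet
        generateFrom_prod isCountablySpanning_measurableSet
        (isCountablySpanning_measurableSet.prod isCountablySpanning_measurableSet)).symm
      (IsPiSystem.prod MeasurableSpace.isPiSystem_measurableSet isPiSystem_prod) ?_ ?_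
    swap
    · simp [measure_univ]
    rintro _ ⟨A, hA, _, ⟨B₁, hB1, B₂, hB2, rfl⟩, rfl⟩
    have hA : MeasurableSet A := hA
    have hB1 : MeasurableSet B₁ := hB1
    have hB2 : MeasurableSet B₂ := hB2
    have hS : MeasurableSet (X ⁻¹' B₁ ∩ Xt ⁻¹' B₂) := (hX hB1).inter (hXt hB2)
    have hlhs : (μ.map (fun ω => (Xh ω, (X ω, Xt ω)))) (A ×ˢ B₁ ×ˢ B₂)
        = μ (Xh ⁻¹' A ∩ (X ⁻¹' B₁ ∩ Xt ⁻¹' B₂)) := by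
      rw [Measure.map_apply hT (hA.prod (hB1.prod hB2))]
      rfl
    have hrhs : (ν ⊗ₘ (κ ×ₖ κ)) (A ×ˢ B₁ ×ˢ B₂) = ∫⁻ b in A, κ b B₁ * κ b B₂ ∂ν := by
      rw [Measure.compProd_apply_prod hA (hB1.prod hB2)]
      refine lintegral_congr fun b => ?_
      rw [Kernel.prod_apply, Measure.prod_prod]
    have hfin2 : ∫⁻ b in A, κ b B₁ * κ b B₂ ∂ν ≠ ⊤ := by
      have hb : ∫⁻ b in A, κ b B₁ * κ b B₂ ∂ν ≤ ∫⁻ _ in A, 1 ∂ν :=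
        lintegral_mono fun b => le_trans (mul_le_mul' prob_le_one prob_le_one) (by simp)
      refine ne_of_lt (lt_of_le_of_lt hb ?_)
      rw [setLIntegral_one]
      exact lt_of_le_of_lt (measure_mono (Set.subset_univ _)) (by simp [measure_univ])
    -- measurability of the integrand over β
    have hfm : Measurable (fun b => (κ b B₁).toReal * (κ b B₂).toReal) :=
      (Kernel.measurable_coe κ hB1).ennreal_toReal.mul (Kernel.measurable_coe κ hB2).ennreal_toReal
    have hreal : (μ (Xh ⁻¹' A ∩ (X ⁻¹' B₁ ∩ Xt ⁻¹' B₂))).toReal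
        = (∫⁻ b in A, κ b B₁ * κ b B₂ ∂ν).toReal := by
      have step1 : (μ (Xh ⁻¹' A ∩ (X ⁻¹' B₁ ∩ Xt ⁻¹' B₂))).toReal
          = ∫ ω in Xh ⁻¹' A, (X ⁻¹' B₁ ∩ Xt ⁻¹' B₂).indicator (fun _ => (1:ℝ)) ω ∂μ := by
        rw [setIntegral_indicator hS, setIntegral_const]
        simp
        rfl
      have hcexp := (condIndepFun_iff_condExp_inter_preimage_eq_mul hX hXt).mp hci B₁ B₂ hB1 hB2
      have E1b := condDistrib_ae_eq_condExp (μ := μ) hXh hX hB1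
      have E1c := condDistrib_ae_eq_condExp (μ := μ) hXh hXt hB2
      rw [hcd] at E1c
      have E : (μ⟦X ⁻¹' B₁ ∩ Xt ⁻¹' B₂ | MeasurableSpace.comap Xh inferInstance⟧)
          =ᵐ[μ] fun ω => (κ (Xh ω) B₁).toReal * (κ (Xh ω) B₂).toReal := by
        filter_upwards [hcexp, E1b, E1c] with ω h1 h2 h3
        rw [h1, ← h2, ← h3]
        rfl
      have step2 : ∫ ω in Xh ⁻¹' A, (X ⁻¹' B₁ ∩ Xt ⁻¹' B₂).indicator (fun _ => (1:ℝ)) ω ∂μ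
          = ∫ ω in Xh ⁻¹' A, (κ (Xh ω) B₁).toReal * (κ (Xh ω) B₂).toReal ∂μ := by
        rw [← setIntegral_condExp hXh.comap_le ((integrable_const (1:ℝ)).indicator hS)
          ⟨A, hA, rfl⟩]
        exact integral_congr_ae (ae_restrict_of_ae E)
      have step3 : ∫ ω in Xh ⁻¹' A, (κ (Xh ω) B₁).toReal * (κ (Xh ω) B₂).toReal ∂μ
          = ∫ b in A, (κ b B₁).toReal * (κ b B₂).toReal ∂ν := by
        rw [hν, Measure.restrict_map hXh hA,
          integral_map hXh.aemeasurable hfm.aestronglyMeasurable]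
      have step4 : (∫⁻ b in A, κ b B₁ * κ b B₂ ∂ν).toReal
          = ∫ b in A, (κ b B₁).toReal * (κ b B₂).toReal ∂ν := by
        have h1 := integral_toReal (μ := ν.restrict A) (f := fun b => κ b B₁ * κ b B₂)
          (((Kernel.measurable_coe κ hB1).mul (Kernel.measurable_coe κ hB2)).aemeasurable)
          (Filter.Eventually.of_forall fun b =>
            lt_of_le_of_lt (le_trans (mul_le_mul' prob_le_one prob_le_one) (by simp))
              ENNReal.one_lt_top)
        rw [← h1]
        exact integral_congr_ae (Filter.Eventually.of_forall fun b => ENNReal.toReal_mul)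
      rw [step1, step2, step3, step4]
    rw [hlhs, hrhs]
    rw [← ENNReal.toReal_eq_toReal_iff' (measure_ne_top _ _) hfin2]
    exact hreal
  -- mean property
  have hXint : Integrable X μ := hX2.integrable one_le_two
  have hgmeas : StronglyMeasurable (fun b => ∫ x, x ∂κ b) := by
    exact (stronglyMeasurable_id.comp_measurable measurable_snd).integral_kernel_prod_right'
      (κ := κ)
  have hKmean : ∀ᵐ b ∂ν, ∫ x, x ∂κ b = b := by
    have hcondX := condExp_ae_eq_integral_condDistrib' hXh hXint
    have hae : ∀ᵐ ω ∂μ, ∫ x, x ∂κ (Xh ω) = Xh ω := by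
      filter_upwards [hmean, hcondX] with ω h1 h2
      exact (h1.trans h2).symm
    rw [hν]
    refine (ae_map_iff hXh.aemeasurable ?_).mpr hae
    exact measurableSet_eq_fun hgmeas.measurable measurable_id
  -- second moment a.e.
  have hnX2 : Integrable (fun ω => ‖X ω‖ ^ 2) μ := sq_int hX2
  have hK2 : ∀ᵐ b ∂ν, Integrable (fun x : EuclideanSpace ℝ (Fin n) => ‖x‖ ^ 2) (κ b) := by
    have hint : Integrable (fun p : EuclideanSpace ℝ (Fin n) × EuclideanSpace ℝ (Fin n)
        => ‖p.2‖ ^ 2) (ν ⊗ₘ κ) := by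
      rw [← hJ2, integrable_map_measure
        (measurable_snd.norm.pow_const 2).aestronglyMeasurable (hXh.prodMk hX).aemeasurable]
      exact hnX2
    exact ((Measure.integrable_compProd_iff hint.aestronglyMeasurable).mp hint).1
  -- second identity
  have hg2m : Measurable (fun p : EuclideanSpace ℝ (Fin n) × EuclideanSpace ℝ (Fin n)
      => ‖p.2 - p.1‖ ^ 2) := (measurable_snd.sub measurable_fst).norm.pow_const 2
  have hg2int : Integrable (fun p : EuclideanSpace ℝ (Fin n) × EuclideanSpace ℝ (Fin n)
      => ‖p.2 - p.1‖ ^ 2) (ν ⊗ₘ κ) := by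
    rw [← hJ2, integrable_map_measure hg2m.aestronglyMeasurable (hXh.prodMk hX).aemeasurable]
    exact sq_int (hX2.sub hXh2)
  have hI2 : ∫ ω, ‖X ω - Xh ω‖ ^ 2 ∂μ = ∫ b, (∫ x, ‖x - b‖ ^ 2 ∂κ b) ∂ν := by
    have h1 : ∫ ω, ‖X ω - Xh ω‖ ^ 2 ∂μ
        = ∫ p : EuclideanSpace ℝ (Fin n) × EuclideanSpace ℝ (Fin n), ‖p.2 - p.1‖ ^ 2
            ∂(μ.map (fun ω => (Xh ω, X ω))) := by
      rw [integral_map (hXh.prodMk hX).aemeasurable hg2m.aestronglyMeasurable]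
    rw [h1, hJ2, Measure.integral_compProd hg2int]
  -- first identity
  have hg1m : Measurable (fun p : EuclideanSpace ℝ (Fin n) ×
      (EuclideanSpace ℝ (Fin n) × EuclideanSpace ℝ (Fin n)) => ‖p.2.1 - p.2.2‖ ^ 2) :=
    (measurable_snd.fst.sub measurable_snd.snd).norm.pow_const 2
  have hg1int : Integrable (fun p : EuclideanSpace ℝ (Fin n) ×
      (EuclideanSpace ℝ (Fin n) × EuclideanSpace ℝ (Fin n)) => ‖p.2.1 - p.2.2‖ ^ 2)
      (ν ⊗ₘ (κ ×ₖ κ)) := by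
    rw [← hJ, integrable_map_measure hg1m.aestronglyMeasurable hT.aemeasurable]
    exact sq_int (hX2.sub hXt2)
  have hsec : ∀ᵐ b ∂ν, Integrable (fun q : EuclideanSpace ℝ (Fin n) × EuclideanSpace ℝ (Fin n)
      => ‖q.1 - q.2‖ ^ 2) ((κ ×ₖ κ) b) :=
    ((Measure.integrable_compProd_iff hg1int.aestronglyMeasurable).mp hg1int).1
  have hI1 : ∫ ω, ‖X ω - Xt ω‖ ^ 2 ∂μ
      = ∫ b, (∫ q : EuclideanSpace ℝ (Fin n) × EuclideanSpace ℝ (Fin n), ‖q.1 - q.2‖ ^ 2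
          ∂((κ ×ₖ κ) b)) ∂ν := by
    have h1 : ∫ ω, ‖X ω - Xt ω‖ ^ 2 ∂μ
        = ∫ p : EuclideanSpace ℝ (Fin n) ×
            (EuclideanSpace ℝ (Fin n) × EuclideanSpace ℝ (Fin n)), ‖p.2.1 - p.2.2‖ ^ 2
            ∂(μ.map (fun ω => (Xh ω, (X ω, Xt ω)))) := by
      rw [integral_map hT.aemeasurable hg1m.aestronglyMeasurable]
    rw [h1, hJ, Measure.integral_compProd hg1int]
  -- pointwise reduction
  have hptwise : ∀ᵐ b ∂ν, ∫ q : EuclideanSpace ℝ (Fin n) × EuclideanSpace ℝ (Fin n),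
      ‖q.1 - q.2‖ ^ 2 ∂((κ ×ₖ κ) b) = 2 * ∫ x, ‖x - b‖ ^ 2 ∂κ b := by
    filter_upwards [hK2, hKmean, hsec] with b h2 hm hs
    rw [Kernel.prod_apply] at hs ⊢
    rw [integral_prod _ hs]
    exact double_integral_dist_sq (κ b) h2 b hm
  rw [hI1, integral_congr_ae hptwise, integral_const_mul, hI2]
end

section
/- For X ~ Bern(p), p ≤ 1/2, Hamming distortion and TV-divergence perception constraint with P ≤ p, the rate-distortion-perception function in the region D1 < D ≤ D2 (with D1 = P/(1+2P−2p), D2 = 2p(1−p)+(2p−1)P) equals R(D,P) = 2H_b(p) + H_b(p−P) − H_t((D−P)/2, p) − H_t((D+P)/2, 1−p), where H_t(p1,p2) is the entropy of a ternary distribution (p1, p2, 1−p1−p2). -/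
open scoped BigOperators ENNReal

/-- The Bernoulli(p) pmf on Bool: `P(X = true) = p`. -/
def bern (p : ℝ) : Bool → ℝ := fun b => if b then p else 1 - p

/-- Hamming distortion on Bool. -/
def hamming : Bool → Bool → ℝ := fun x y => if x = y then 0 else 1

/-- Total variation distance between two pmfs on a finite alphabet. -/
noncomputable def dTV {𝓧 : Type*} [Fintype 𝓧] (p q : 𝓧 → ℝ) : ℝ := (1 / 2) * ∑ z, |p z - q z|

/-- Binary entropy (natural log). -/
noncomputable def Hb (x : ℝ) : ℝ := -(x * Real.log x) - (1 - x) * Real.log (1 - x)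

/-- Ternary entropy of the distribution (p₁, p₂, 1 − p₁ − p₂) (natural log). -/
noncomputable def Ht (p₁ p₂ : ℝ) : ℝ :=
  -(p₁ * Real.log p₁) - p₂ * Real.log p₂ - (1 - p₁ - p₂) * Real.log (1 - p₁ - p₂)



/- ### Auxiliary lemmas ### -/


lemma single_term (a b s t : ℝ) (ha : 0 < a) (hb : 0 < b) (hs : 0 < s) (ht : 0 < t) :
    a - b * s / t ≤ a * (Real.log (a / b) - Real.log (s / t)) := by
  have h1 : Real.log (a / b) - Real.log (s / t) = Real.log (a * t / (b * s)) := by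
    rw [Real.log_div ha.ne' hb.ne', Real.log_div hs.ne' ht.ne',
      Real.log_div (by positivity) (by positivity), Real.log_mul ha.ne' ht.ne',
      Real.log_mul hb.ne' hs.ne']
    ring
  rw [h1]
  have h2 : Real.log (b * s / (a * t)) ≤ b * s / (a * t) - 1 :=
    Real.log_le_sub_one_of_pos (by positivity)
  have h3 : Real.log (a * t / (b * s)) = - Real.log (b * s / (a * t)) := by
    rw [← Real.log_inv]; congr 1; field_simp
  rw [h3]
  have h4 : 1 - b * s / (a * t) ≤ -Real.log (b * s / (a * t)) := by linarith
  calc a - b * s / t = a * (1 - b * s / (a * t)) := by field_simp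
    _ ≤ a * (-Real.log (b * s / (a * t))) := mul_le_mul_of_nonneg_left h4 ha.le

lemma two_point_logsum (a1 a2 b1 b2 : ℝ) (ha1 : 0 ≤ a1) (ha2 : 0 ≤ a2)
    (hb1 : 0 < b1) (hb2 : 0 < b2) :
    (a1 + a2) * Real.log ((a1 + a2) / (b1 + b2)) ≤
      a1 * Real.log (a1 / b1) + a2 * Real.log (a2 / b2) := by
  rcases eq_or_lt_of_le ha1 with h1 | h1
  · rcases eq_or_lt_of_le ha2 with h2 | h2
    · simp [← h1, ← h2]
    · rw [← h1]
      simp only [zero_mul, zero_add, add_zero]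
      have : Real.log (a2 / (b1 + b2)) ≤ Real.log (a2 / b2) :=
        Real.log_le_log (by positivity)
          (div_le_div_of_nonneg_left h2.le (by positivity) (by linarith))
      exact mul_le_mul_of_nonneg_left this h2.le
  · rcases eq_or_lt_of_le ha2 with h2 | h2
    · rw [← h2]
      simp only [zero_mul, add_zero]
      have : Real.log (a1 / (b1 + b2)) ≤ Real.log (a1 / b1) :=
        Real.log_le_log (by positivity)
          (div_le_div_of_nonneg_left h1.le (by positivity) (by linarith))
      exact mul_le_mul_of_nonneg_left this h1.le
    · have hs : 0 < a1 + a2 := by linarith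
      have ht : 0 < b1 + b2 := by linarith
      have e1 := single_term a1 b1 (a1+a2) (b1+b2) h1 hb1 hs ht
      have e2 := single_term a2 b2 (a1+a2) (b1+b2) h2 hb2 hs ht
      have h0 : a1 - b1*(a1+a2)/(b1+b2) + (a2 - b2*(a1+a2)/(b1+b2)) = 0 := by
        field_simp; ring
      nlinarith [e1, e2]

lemma target_expand (p Pc D : ℝ) :
    2*Hb p + Hb (p-Pc) - Ht ((D-Pc)/2) p - Ht ((D+Pc)/2) (1-p)
    = (D-Pc)/2 * Real.log ((D-Pc)/2) + (1-p-(D-Pc)/2) * Real.log (1-p-(D-Pc)/2)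
      + (D+Pc)/2 * Real.log ((D+Pc)/2) + (p-(D+Pc)/2) * Real.log (p-(D+Pc)/2)
      - p*Real.log p - (1-p)*Real.log (1-p) - (p-Pc)*Real.log (p-Pc)
      - (1-p+Pc)*Real.log (1-p+Pc) := by
  unfold Hb Ht
  rw [show (1:ℝ)-(p-Pc) = 1-p+Pc by ring, show (1:ℝ)-(D-Pc)/2-p = 1-p-(D-Pc)/2 by ring,
    show (1:ℝ)-(D+Pc)/2-(1-p) = p-(D+Pc)/2 by ring]
  ring


lemma achieve_eq (p Pc D : ℝ) (hp : 0 < p) (h1p : 0 < 1-p)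
    (hA1 : 0 < 1-p-(D-Pc)/2) (hA2 : 0 < (D-Pc)/2) (hA3 : 0 < (D+Pc)/2)
    (hA4 : 0 < p-(D+Pc)/2) (hQp : 0 < p-Pc) (hQ1 : 0 < 1-p+Pc) :
    p*(1-(D+Pc)/(2*p))*Real.log ((1-(D+Pc)/(2*p)) /
        (p*(1-(D+Pc)/(2*p)) + (1-p)*((D-Pc)/(2*(1-p)))))
    + p*((D+Pc)/(2*p))*Real.log (((D+Pc)/(2*p)) /
        (p*((D+Pc)/(2*p)) + (1-p)*(1-(D-Pc)/(2*(1-p)))))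
    + ((1-p)*((D-Pc)/(2*(1-p)))*Real.log (((D-Pc)/(2*(1-p))) /
        (p*(1-(D+Pc)/(2*p)) + (1-p)*((D-Pc)/(2*(1-p)))))
      + (1-p)*(1-(D-Pc)/(2*(1-p)))*Real.log ((1-(D-Pc)/(2*(1-p))) /
        (p*((D+Pc)/(2*p)) + (1-p)*(1-(D-Pc)/(2*(1-p))))))
    = 2*Hb p + Hb (p-Pc) - Ht ((D-Pc)/2) p - Ht ((D+Pc)/2) (1-p) := by
  have hd1 : p*(1-(D+Pc)/(2*p)) + (1-p)*((D-Pc)/(2*(1-p))) = p - Pc := by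
    field_simp; ring
  have hd2 : p*((D+Pc)/(2*p)) + (1-p)*(1-(D-Pc)/(2*(1-p))) = 1 - p + Pc := by
    field_simp; ring
  rw [hd1, hd2]
  have ha1 : (1-(D+Pc)/(2*p))/(p-Pc) = (p-(D+Pc)/2)/(p*(p-Pc)) := by
    field_simp
  have ha2 : ((D+Pc)/(2*p))/(1-p+Pc) = ((D+Pc)/2)/(p*(1-p+Pc)) := by
    rw [div_div, div_div]; congr 1; ring
  have ha3 : ((D-Pc)/(2*(1-p)))/(p-Pc) = ((D-Pc)/2)/((1-p)*(p-Pc)) := by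
    rw [div_div, div_div]; congr 1; ring
  have ha4 : (1-(D-Pc)/(2*(1-p)))/(1-p+Pc) = (1-p-(D-Pc)/2)/((1-p)*(1-p+Pc)) := by
    field_simp
  rw [ha1, ha2, ha3, ha4]
  rw [Real.log_div hA4.ne' (by positivity), Real.log_mul hp.ne' hQp.ne',
    Real.log_div hA3.ne' (by positivity), Real.log_mul hp.ne' hQ1.ne',
    Real.log_div hA2.ne' (by positivity), Real.log_mul h1p.ne' hQp.ne',
    Real.log_div hA1.ne' (by positivity), Real.log_mul h1p.ne' hQ1.ne']
  rw [target_expand p Pc D]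
  field_simp
  ring


lemma split4 (c a b A' Q' : ℝ) (h : a = 0 ∨ (0 < a ∧ 0 < b)) (hc : 0 < c)
    (hA' : 0 < A') (hQ' : 0 < Q') :
    c * a * Real.log (a / b) =
      c * a * Real.log ((c * a) / A') - c * a * Real.log (b / Q')
        + c * a * Real.log (A' / (c * Q')) := by
  rcases h with h | ⟨ha, hb⟩
  · simp [h]
  · rw [Real.log_div (by positivity) hA'.ne', Real.log_div hb.ne' hQ'.ne',
      Real.log_div hA'.ne' (by positivity), Real.log_mul hc.ne' ha.ne',
      Real.log_mul hc.ne' hQ'.ne', Real.log_div ha.ne' hb.ne']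
    ring


noncomputable def Kopt (p Pc D : ℝ) : Bool → Bool → ℝ := fun x y =>
  if x then (if y then 1-(D+Pc)/(2*p) else (D+Pc)/(2*p))
  else (if y then (D-Pc)/(2*(1-p)) else 1-(D-Pc)/(2*(1-p)))

set_option maxHeartbeats 2000000 in
lemma converse_real (p Pc D u v : ℝ)
    (hp : 0 < p) (hp2 : p ≤ 1/2) (hP0 : 0 ≤ Pc) (hPcp : Pc < p) (hPD : Pc < D)
    (hmD : Pc ≤ D * (1 + 2*Pc - 2*p))
    (hD2 : D ≤ 2*p*(1-p) + (2*p-1)*Pc)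
    (hu0 : 0 ≤ u) (hu1 : u ≤ 1) (hv0 : 0 ≤ v) (hv1 : v ≤ 1)
    (hdist : (1-p)*u + p*v ≤ D)
    (htv : p*v - (1-p)*u ≤ Pc) :
    2*Hb p + Hb (p-Pc) - Ht ((D-Pc)/2) p - Ht ((D+Pc)/2) (1-p) ≤
      (1-p)*(1-u)*Real.log ((1-u)/((1-p)*(1-u)+p*v))
      + (1-p)*u*Real.log (u/((1-p)*u+p*(1-v)))
      + p*v*Real.log (v/((1-p)*(1-u)+p*v))
      + p*(1-v)*Real.log ((1-v)/((1-p)*u+p*(1-v))) := by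
  have h1p : 0 < 1 - p := by linarith
  have hA2 : 0 < (D-Pc)/2 := by linarith
  have hA3 : 0 < (D+Pc)/2 := by linarith
  have hQp : 0 < p - Pc := by linarith
  have hQ1 : 0 < 1 - p + Pc := by linarith
  have hA4 : 0 < p - (D+Pc)/2 := by nlinarith [mul_pos hp (sub_pos.2 hPcp)]
  have hA1 : 0 < 1 - p - (D-Pc)/2 := by nlinarith
  -- case hypotheses for split4
  have hc1 : (1-u) = 0 ∨ (0 < 1-u ∧ 0 < (1-p)*(1-u)+p*v) := by
    rcases eq_or_lt_of_le (sub_nonneg.2 hu1) with h | h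
    · exact Or.inl h.symm
    · exact Or.inr ⟨h, by nlinarith [mul_pos h1p h, mul_nonneg hp.le hv0]⟩
  have hc2 : u = 0 ∨ (0 < u ∧ 0 < (1-p)*u+p*(1-v)) := by
    rcases eq_or_lt_of_le hu0 with h | h
    · exact Or.inl h.symm
    · exact Or.inr ⟨h, by nlinarith [mul_pos h1p h, mul_nonneg hp.le (sub_nonneg.2 hv1)]⟩
  have hc3 : v = 0 ∨ (0 < v ∧ 0 < (1-p)*(1-u)+p*v) := by
    rcases eq_or_lt_of_le hv0 with h | h
    · exact Or.inl h.symm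
    · exact Or.inr ⟨h, by nlinarith [mul_pos hp h, mul_nonneg h1p.le (sub_nonneg.2 hu1)]⟩
  have hc4 : (1-v) = 0 ∨ (0 < 1-v ∧ 0 < (1-p)*u+p*(1-v)) := by
    rcases eq_or_lt_of_le (sub_nonneg.2 hv1) with h | h
    · exact Or.inl h.symm
    · exact Or.inr ⟨h, by nlinarith [mul_pos hp h, mul_nonneg h1p.le hu0]⟩
  have t1 := split4 (1-p) (1-u) ((1-p)*(1-u)+p*v) (1-p-(D-Pc)/2) (1-p+Pc) hc1 h1p hA1 hQ1
  have t2 := split4 (1-p) u ((1-p)*u+p*(1-v)) ((D-Pc)/2) (p-Pc) hc2 h1p hA2 hQp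
  have t3 := split4 p v ((1-p)*(1-u)+p*v) ((D+Pc)/2) (1-p+Pc) hc3 hp hA3 hQ1
  have t4 := split4 p (1-v) ((1-p)*u+p*(1-v)) (p-(D+Pc)/2) (p-Pc) hc4 hp hA4 hQp
  -- log-sum (data processing) inequalities
  have e1 := two_point_logsum ((1-p)*(1-u)) (p*v) (1-p-(D-Pc)/2) ((D+Pc)/2)
    (mul_nonneg h1p.le (by linarith)) (mul_nonneg hp.le hv0) hA1 hA3
  rw [show (1-p-(D-Pc)/2) + (D+Pc)/2 = 1-p+Pc by ring] at e1
  have e2 := two_point_logsum ((1-p)*u) (p*(1-v)) ((D-Pc)/2) (p-(D+Pc)/2)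
    (mul_nonneg h1p.le hu0) (mul_nonneg hp.le (by linarith)) hA2 hA4
  rw [show (D-Pc)/2 + (p-(D+Pc)/2) = p-Pc by ring] at e2
  -- expand the constant logs
  have r1 : Real.log ((1-p-(D-Pc)/2)/((1-p)*(1-p+Pc)))
      = Real.log (1-p-(D-Pc)/2) - Real.log (1-p) - Real.log (1-p+Pc) := by
    rw [Real.log_div hA1.ne' (by positivity), Real.log_mul h1p.ne' hQ1.ne']; ring
  have r2 : Real.log (((D-Pc)/2)/((1-p)*(p-Pc)))
      = Real.log ((D-Pc)/2) - Real.log (1-p) - Real.log (p-Pc) := by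
    rw [Real.log_div hA2.ne' (by positivity), Real.log_mul h1p.ne' hQp.ne']; ring
  have r3 : Real.log (((D+Pc)/2)/(p*(1-p+Pc)))
      = Real.log ((D+Pc)/2) - Real.log p - Real.log (1-p+Pc) := by
    rw [Real.log_div hA3.ne' (by positivity), Real.log_mul hp.ne' hQ1.ne']; ring
  have r4 : Real.log ((p-(D+Pc)/2)/(p*(p-Pc)))
      = Real.log (p-(D+Pc)/2) - Real.log p - Real.log (p-Pc) := by
    rw [Real.log_div hA4.ne' (by positivity), Real.log_mul hp.ne' hQp.ne']; ring
  rw [r1] at t1; rw [r2] at t2; rw [r3] at t3; rw [r4] at t4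
  -- multiplier nonnegativity
  have hl1 : 0 ≤ (Real.log (1-p-(D-Pc)/2) - Real.log ((D-Pc)/2))
      + (Real.log (p-(D+Pc)/2) - Real.log ((D+Pc)/2)) := by
    have hprod : (D-Pc)/2 * ((D+Pc)/2) ≤ (1-p-(D-Pc)/2) * (p-(D+Pc)/2) := by linarith
    have hlog := Real.log_le_log (by positivity) hprod
    rw [Real.log_mul hA2.ne' hA3.ne', Real.log_mul hA1.ne' hA4.ne'] at hlog
    linarith
  have hl2 : 0 ≤ 2*(Real.log (1-p+Pc) - Real.log (p-Pc))
      + (Real.log (p-(D+Pc)/2) - Real.log ((D+Pc)/2))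
      - (Real.log (1-p-(D-Pc)/2) - Real.log ((D-Pc)/2)) := by
    have h1 : 0 ≤ D * (1 + 2*Pc - 2*p) - Pc := by linarith
    have h2 : 0 ≤ 2*p*(1-p) + (2*p-1)*Pc - D := by linarith
    have hmul := mul_nonneg h1 h2
    have hprod : (p-Pc)^2*((D+Pc)/2*(1-p-(D-Pc)/2))
        ≤ (1-p+Pc)^2*((D-Pc)/2*(p-(D+Pc)/2)) := by linarith [hmul]
    have hlog := Real.log_le_log (by positivity) hprod
    rw [Real.log_mul (pow_ne_zero 2 hQp.ne') (by positivity),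
      Real.log_mul (pow_ne_zero 2 hQ1.ne') (by positivity),
      Real.log_mul hA3.ne' hA1.ne', Real.log_mul hA2.ne' hA4.ne',
      Real.log_pow, Real.log_pow] at hlog
    push_cast at hlog
    linarith
  -- assemble
  have hm1 : 0 ≤ ((Real.log (1-p-(D-Pc)/2) - Real.log ((D-Pc)/2))
      + (Real.log (p-(D+Pc)/2) - Real.log ((D+Pc)/2)))/2 * (D - ((1-p)*u + p*v)) :=
    mul_nonneg (by linarith) (by linarith)
  have hm2 : 0 ≤ ((Real.log (1-p+Pc) - Real.log (p-Pc))
      + ((Real.log (p-(D+Pc)/2) - Real.log ((D+Pc)/2))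
        - (Real.log (1-p-(D-Pc)/2) - Real.log ((D-Pc)/2)))/2)
      * (Pc - (p*v - (1-p)*u)) :=
    mul_nonneg (by linarith) (by linarith)
  rw [target_expand p Pc D]
  have hF : (1-p)*(1-u)*Real.log ((1-u)/((1-p)*(1-u)+p*v))
      + (1-p)*u*Real.log (u/((1-p)*u+p*(1-v)))
      + p*v*Real.log (v/((1-p)*(1-u)+p*v))
      + p*(1-v)*Real.log ((1-v)/((1-p)*u+p*(1-v)))
      = ((1-p)*(1-u)*Real.log ((1-p)*(1-u)/(1-p-(D-Pc)/2)) + p*v*Real.log (p*v/((D+Pc)/2)))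
        + ((1-p)*u*Real.log ((1-p)*u/((D-Pc)/2)) + p*(1-v)*Real.log (p*(1-v)/(p-(D+Pc)/2)))
        - ((1-p)*(1-u)+p*v) * Real.log (((1-p)*(1-u)+p*v)/(1-p+Pc))
        - ((1-p)*u+p*(1-v)) * Real.log (((1-p)*u+p*(1-v))/(p-Pc))
        + ((1-p)*(1-u)*(Real.log (1-p-(D-Pc)/2) - Real.log (1-p) - Real.log (1-p+Pc))
          + (1-p)*u*(Real.log ((D-Pc)/2) - Real.log (1-p) - Real.log (p-Pc))
          + p*v*(Real.log ((D+Pc)/2) - Real.log p - Real.log (1-p+Pc))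
          + p*(1-v)*(Real.log (p-(D+Pc)/2) - Real.log p - Real.log (p-Pc))) := by
    linear_combination t1 + t2 + t3 + t4
  rw [hF]
  have hEL : (D-Pc)/2 * Real.log ((D-Pc)/2) + (1-p-(D-Pc)/2) * Real.log (1-p-(D-Pc)/2)
      + (D+Pc)/2 * Real.log ((D+Pc)/2) + (p-(D+Pc)/2) * Real.log (p-(D+Pc)/2)
      - p*Real.log p - (1-p)*Real.log (1-p) - (p-Pc)*Real.log (p-Pc)
      - (1-p+Pc)*Real.log (1-p+Pc)
      ≤ (1-p)*(1-u)*(Real.log (1-p-(D-Pc)/2) - Real.log (1-p) - Real.log (1-p+Pc))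
        + (1-p)*u*(Real.log ((D-Pc)/2) - Real.log (1-p) - Real.log (p-Pc))
        + p*v*(Real.log ((D+Pc)/2) - Real.log p - Real.log (1-p+Pc))
        + p*(1-v)*(Real.log (p-(D+Pc)/2) - Real.log p - Real.log (p-Pc)) := by
    have hKKT : ((1-p)*(1-u)*(Real.log (1-p-(D-Pc)/2) - Real.log (1-p) - Real.log (1-p+Pc))
        + (1-p)*u*(Real.log ((D-Pc)/2) - Real.log (1-p) - Real.log (p-Pc))
        + p*v*(Real.log ((D+Pc)/2) - Real.log p - Real.log (1-p+Pc))
        + p*(1-v)*(Real.log (p-(D+Pc)/2) - Real.log p - Real.log (p-Pc)))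
        - ((D-Pc)/2 * Real.log ((D-Pc)/2) + (1-p-(D-Pc)/2) * Real.log (1-p-(D-Pc)/2)
          + (D+Pc)/2 * Real.log ((D+Pc)/2) + (p-(D+Pc)/2) * Real.log (p-(D+Pc)/2)
          - p*Real.log p - (1-p)*Real.log (1-p) - (p-Pc)*Real.log (p-Pc)
          - (1-p+Pc)*Real.log (1-p+Pc))
        = ((Real.log (1-p-(D-Pc)/2) - Real.log ((D-Pc)/2))
            + (Real.log (p-(D+Pc)/2) - Real.log ((D+Pc)/2)))/2 * (D - ((1-p)*u + p*v))
          + ((Real.log (1-p+Pc) - Real.log (p-Pc))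
            + ((Real.log (p-(D+Pc)/2) - Real.log ((D+Pc)/2))
              - (Real.log (1-p-(D-Pc)/2) - Real.log ((D-Pc)/2)))/2)
            * (Pc - (p*v - (1-p)*u)) := by ring
    linarith [hm1, hm2, hKKT]
  linarith [e1, e2, hEL]


/-- for X ~ Bern(p), p ≤ 1/2, Hamming distortion and TV perception constraint
with P ≤ p, in the region D₁ < D ≤ D₂ (D₁ = P/(1+2P−2p), D₂ = 2p(1−p)+(2p−1)P):
R(D,P) = 2H_b(p) + H_b(p−P) − H_t((D−P)/2, p) − H_t((D+P)/2, 1−p). -/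
theorem bernoulli_rdp_middle_region (p Pc D : ℝ) (hp : 0 < p) (hp2 : p ≤ 1 / 2)
    (hP0 : 0 ≤ Pc) (hPp : Pc ≤ p)
    (hD1 : Pc / (1 + 2 * Pc - 2 * p) < D)
    (hD2 : D ≤ 2 * p * (1 - p) + (2 * p - 1) * Pc) :
    RDP (bern p) hamming dTV D Pc =
      ENNReal.ofReal
        (2 * Hb p + Hb (p - Pc) - Ht ((D - Pc) / 2) p - Ht ((D + Pc) / 2) (1 - p)) := by
  have h1p : 0 < 1 - p := by linarith
  have hPcp : Pc < p := by
    rcases eq_or_lt_of_le hPp with h | h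
    · exfalso
      subst h
      rw [show 1+2*Pc-2*Pc = (1:ℝ) by ring, div_one] at hD1
      nlinarith [hD1, hD2]
    · exact h
  have hm0 : 0 ≤ 1 + 2*Pc - 2*p := by linarith
  have hPD : Pc < D := by
    rcases eq_or_lt_of_le hm0 with h | h
    · have hPc0 : Pc = 0 := by linarith
      rw [hPc0, zero_div] at hD1
      rw [hPc0]; exact hD1
    · have h2 := (div_lt_iff₀ h).1 hD1
      nlinarith [h2]
  have hmD : Pc ≤ D * (1 + 2*Pc - 2*p) := by
    rcases eq_or_lt_of_le hm0 with h | h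
    · have hPc0 : Pc = 0 := by linarith
      have hz : D * (1 + 2*Pc - 2*p) = 0 := by rw [← h]; ring
      rw [hz, hPc0]
    · exact ((div_lt_iff₀ h).1 hD1).le
  have hA2 : 0 < (D-Pc)/2 := by linarith
  have hA3 : 0 < (D+Pc)/2 := by linarith
  have hQp : 0 < p - Pc := by linarith
  have hQ1 : 0 < 1 - p + Pc := by linarith
  have hA4 : 0 < p - (D+Pc)/2 := by nlinarith [mul_pos hp (sub_pos.2 hPcp)]
  have hA1 : 0 < 1 - p - (D-Pc)/2 := by nlinarith
  have hu0 : (0:ℝ) ≤ (D-Pc)/(2*(1-p)) := div_nonneg (by linarith) (by linarith)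
  have hu1 : (D-Pc)/(2*(1-p)) ≤ 1 := by
    rw [div_le_one (by linarith)]; linarith
  have hv0 : (0:ℝ) ≤ (D+Pc)/(2*p) := div_nonneg (by linarith) (by linarith)
  have hv1 : (D+Pc)/(2*p) ≤ 1 := by
    rw [div_le_one (by linarith)]; linarith
  have hker : IsKernel (Kopt p Pc D) := by
    intro x
    constructor
    · intro y
      cases x <;> cases y <;> simp only [Kopt, if_true, if_false, Bool.false_eq_true] <;>
        linarith
    · cases x <;>
        simp only [Kopt, Fintype.sum_bool, if_true, if_false, Bool.false_eq_true] <;> ring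
  unfold RDP
  refine le_antisymm (sInf_le ?_) (le_sInf ?_)
  · refine ⟨Kopt p Pc D, hker, ?_, ?_, ?_⟩
    · have hed : expDistortion (bern p) hamming (Kopt p Pc D)
          = p*((D+Pc)/(2*p)) + (1-p)*((D-Pc)/(2*(1-p))) := by
        simp only [expDistortion, bern, hamming, Kopt, Fintype.sum_bool, if_true, if_false,
          Bool.false_eq_true]
        norm_num
      rw [hed]
      have : p*((D+Pc)/(2*p)) + (1-p)*((D-Pc)/(2*(1-p))) = D := by field_simp; ring
      linarith [this]
    · have h1 : outDist (bern p) (Kopt p Pc D) true = p - Pc := by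
        simp only [outDist, bern, Kopt, Fintype.sum_bool, if_true, if_false, Bool.false_eq_true]
        field_simp; ring
      have h2 : outDist (bern p) (Kopt p Pc D) false = 1 - p + Pc := by
        simp only [outDist, bern, Kopt, Fintype.sum_bool, if_true, if_false, Bool.false_eq_true]
        field_simp; ring
      have hdtv : dTV (bern p) (outDist (bern p) (Kopt p Pc D)) = Pc := by
        simp only [dTV, Fintype.sum_bool, h1, h2, bern, if_true, if_false, Bool.false_eq_true]
        rw [show p - (p - Pc) = Pc by ring, show 1 - p - (1-p+Pc) = -Pc by ring, abs_neg,
          abs_of_nonneg hP0]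
        ring
      rw [hdtv]
    · have hmi : mutualInfo (bern p) (Kopt p Pc D)
          = p*(1-(D+Pc)/(2*p))*Real.log ((1-(D+Pc)/(2*p)) /
              (p*(1-(D+Pc)/(2*p)) + (1-p)*((D-Pc)/(2*(1-p)))))
            + p*((D+Pc)/(2*p))*Real.log (((D+Pc)/(2*p)) /
              (p*((D+Pc)/(2*p)) + (1-p)*(1-(D-Pc)/(2*(1-p)))))
            + ((1-p)*((D-Pc)/(2*(1-p)))*Real.log (((D-Pc)/(2*(1-p))) /
              (p*(1-(D+Pc)/(2*p)) + (1-p)*((D-Pc)/(2*(1-p)))))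
              + (1-p)*(1-(D-Pc)/(2*(1-p)))*Real.log ((1-(D-Pc)/(2*(1-p))) /
              (p*((D+Pc)/(2*p)) + (1-p)*(1-(D-Pc)/(2*(1-p)))))) := by
        simp only [mutualInfo, outDist, bern, Kopt, Fintype.sum_bool, if_true, if_false,
          Bool.false_eq_true]
      rw [hmi, achieve_eq p Pc D hp h1p hA1 hA2 hA3 hA4 hQp hQ1]
  · rintro r ⟨K, hK, hdist, hperc, rfl⟩
    apply ENNReal.ofReal_le_ofReal
    obtain ⟨hKf, hKfs⟩ := hK false
    obtain ⟨hKt, hKts⟩ := hK true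
    rw [Fintype.sum_bool] at hKfs hKts
    have hff : K false false = 1 - K false true := by linarith
    have htt : K true true = 1 - K true false := by linarith
    have hu'0 : 0 ≤ K false true := hKf true
    have hu'1 : K false true ≤ 1 := by linarith [hKf false]
    have hv'0 : 0 ≤ K true false := hKt false
    have hv'1 : K true false ≤ 1 := by linarith [hKt true]
    have hmi : mutualInfo (bern p) K =
        (1-p)*(1-K false true)*Real.log ((1-K false true) /
            ((1-p)*(1-K false true)+p*(K true false)))
        + (1-p)*(K false true)*Real.log ((K false true) /
            ((1-p)*(K false true)+p*(1-K true false)))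
        + p*(K true false)*Real.log ((K true false) /
            ((1-p)*(1-K false true)+p*(K true false)))
        + p*(1-K true false)*Real.log ((1-K true false) /
            ((1-p)*(K false true)+p*(1-K true false))) := by
      simp only [mutualInfo, outDist, bern, Fintype.sum_bool, if_true, if_false,
        Bool.false_eq_true, hff, htt]
      rw [show p*(1-K true false)+(1-p)*K false true
          = (1-p)*(K false true)+p*(1-K true false) by ring,
        show p*K true false+(1-p)*(1-K false true)
          = (1-p)*(1-K false true)+p*(K true false) by ring]
      ring
    have hed : expDistortion (bern p) hamming K
        = p*(K true false) + (1-p)*(K false true) := by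
      simp only [expDistortion, bern, hamming, Fintype.sum_bool, if_true, if_false,
        Bool.false_eq_true]
      norm_num
    have hdtv : p*(K true false) - (1-p)*(K false true) ≤ Pc := by
      have h1 : dTV (bern p) (outDist (bern p) K) =
          |p*(K true false) - (1-p)*(K false true)| := by
        simp only [dTV, outDist, bern, Fintype.sum_bool, if_true, if_false,
          Bool.false_eq_true, hff, htt]
        rw [show p - (p*(1-K true false)+(1-p)*K false true)
            = p*(K true false) - (1-p)*(K false true) by ring,
          show 1 - p - (p*K true false+(1-p)*(1-K false true))
            = -(p*(K true false) - (1-p)*(K false true)) by ring, abs_neg]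
        ring
      rw [h1] at hperc
      linarith [le_abs_self (p*(K true false) - (1-p)*(K false true))]
    rw [hmi]
    exact converse_real p Pc D (K false true) (K true false) hp hp2 hP0 hPcp hPD hmD hD2
      hu'0 hu'1 hv'0 hv'1 (by rw [hed] at hdist; linarith) hdtv
end

section
/- For X ~ Bern(p), p ≤ 1/2, with Hamming distortion and TV perception constraint P ≤ p, the rate-distortion-perception function reaches zero exactly when D ≥ D2 := 2p(1−p) + (2p−1)P; at D = D2, the choice a = b = (1−p) + P makes X̂ independent of X while satisfying P(X≠X̂) = D2 and d_TV(p_X, p_{X̂}) = P. -/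
open scoped BigOperators ENNReal

private lemma phi_convex : ConvexOn ℝ (Set.Icc (0:ℝ) 1)
    (fun x => -Real.binEntropy x - 2 * x ^ 2) := by
  apply convexOn_of_hasDerivWithinAt2_nonneg (convex_Icc 0 1)
    (f' := fun x => Real.log x - Real.log (1 - x) - 4 * x)
    (f'' := fun x => 1 / x + 1 / (1 - x) - 4)
  · exact (Real.binEntropy_continuous.neg.sub (by continuity)).continuousOn
  · intro x hx
    rw [interior_Icc] at hx
    have h1 : HasDerivAt Real.binEntropy (Real.log (1 - x) - Real.log x) x :=
      Real.hasDerivAt_binEntropy (ne_of_gt hx.1) (ne_of_lt hx.2)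
    have h2 : HasDerivAt (fun x : ℝ => 2 * x ^ 2) (4 * x) x := by
      have : HasDerivAt (fun x : ℝ => 2 * x ^ 2) (2 * (((2:ℕ):ℝ) * x ^ (2 - 1))) x :=
        (hasDerivAt_pow 2 x).const_mul (2:ℝ)
      convert this using 1
      ring
    have h3 := h1.neg.sub h2
    have : -(Real.log (1 - x) - Real.log x) - 4 * x
        = Real.log x - Real.log (1 - x) - 4 * x := by ring
    rw [this] at h3
    exact h3.hasDerivWithinAt
  · intro x hx
    rw [interior_Icc] at hx
    have hx0 : x ≠ 0 := ne_of_gt hx.1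
    have hx1 : (1:ℝ) - x ≠ 0 := sub_ne_zero_of_ne (ne_of_lt hx.2).symm
    have hL : HasDerivAt (fun y : ℝ => Real.log y) x⁻¹ x := Real.hasDerivAt_log hx0
    have hone : HasDerivAt (fun y : ℝ => 1 - y) (-1) x := by
      simpa using (hasDerivAt_id x).const_sub 1
    have hL2 : HasDerivAt (fun y : ℝ => Real.log (1 - y)) ((1 - x)⁻¹ * (-1)) x :=
      (Real.hasDerivAt_log hx1).comp x hone
    have h4 : HasDerivAt (fun y : ℝ => 4 * y) 4 x := by
      simpa using (hasDerivAt_id x).const_mul (4:ℝ)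
    have h5 := (hL.sub hL2).sub h4
    have : x⁻¹ - (1 - x)⁻¹ * (-1) - 4 = 1 / x + 1 / (1 - x) - 4 := by
      field_simp
      ring
    rw [this] at h5
    exact h5.hasDerivWithinAt
  · intro x hx
    rw [interior_Icc] at hx
    have hx0 : 0 < x := hx.1
    have hx1 : 0 < 1 - x := by linarith [hx.2]
    have hprod : 0 < x * (1 - x) := mul_pos hx0 hx1
    rw [sub_nonneg, div_add_div _ _ (ne_of_gt hx0) (ne_of_gt hx1)]
    rw [le_div_iff₀ hprod]
    nlinarith [sq_nonneg (2 * x - 1)]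

private lemma lsplit (x c : ℝ) (hx : 0 ≤ x) (hc : c ≠ 0) :
    x * Real.log (x / c) = x * Real.log x - x * Real.log c := by
  rcases hx.eq_or_lt with h | h
  · simp [← h]
  · rw [Real.log_div (ne_of_gt h) hc]; ring

private lemma key (p a b : ℝ) (hp0 : 0 < p) (hp1 : p < 1)
    (ha : a ∈ Set.Icc (0:ℝ) 1) (hb : b ∈ Set.Icc (0:ℝ) 1) :
    2 * p * (1 - p) * (b - a) ^ 2 ≤
      (1 - p) * (a * Real.log (a / ((1-p)*a + p*b)) +
        (1 - a) * Real.log ((1 - a) / (1 - ((1-p)*a + p*b)))) +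
      p * (b * Real.log (b / ((1-p)*a + p*b)) +
        (1 - b) * Real.log ((1 - b) / (1 - ((1-p)*a + p*b)))) := by
  obtain ⟨ha0, ha1⟩ := ha
  obtain ⟨hb0, hb1⟩ := hb
  by_cases hq0 : (1-p)*a + p*b = 0
  · have ha' : a = 0 := by nlinarith
    have hb' : b = 0 := by nlinarith
    simp [ha', hb', hq0]
  by_cases hq1 : (1-p)*a + p*b = 1
  · have ha' : a = 1 := by nlinarith
    have hb' : b = 1 := by nlinarith
    simp [ha', hb', hq1]
  have hq1' : 1 - ((1-p)*a + p*b) ≠ 0 := fun h => hq1 (by linarith)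
  rw [lsplit a _ ha0 hq0, lsplit b _ hb0 hq0,
    lsplit (1 - a) _ (by linarith) hq1', lsplit (1 - b) _ (by linarith) hq1']
  have hc := phi_convex.2 ⟨ha0, ha1⟩ ⟨hb0, hb1⟩
    (by linarith : (0:ℝ) ≤ 1 - p) hp0.le (by ring : (1 - p) + p = 1)
  simp only [smul_eq_mul] at hc
  have hbin : ∀ x : ℝ, Real.binEntropy x = -(x * Real.log x) - (1-x) * Real.log (1-x) := by
    intro x
    rw [Real.binEntropy, Real.log_inv, Real.log_inv]; ring
  rw [hbin, hbin, hbin] at hc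
  nlinarith [hc]


/-- STATEMENT 12: for X ~ Bern(p), p ≤ 1/2, Hamming distortion and TV perception constraint
with P ≤ p, the rate-distortion-perception function reaches zero exactly when
D ≥ D₂ = 2p(1−p) + (2p−1)P; and at D = D₂ the choice a = b = (1−p) + P makes X̂ independent
of X (so I(X;X̂) = 0) while satisfying P(X ≠ X̂) = D₂ and d_TV(p_X, p_X̂) = P. -/
theorem bernoulli_rdp_zero_iff (p Pc : ℝ) (hp : 0 < p) (hp2 : p ≤ 1 / 2)
    (hP0 : 0 ≤ Pc) (hPp : Pc ≤ p) :
    (∀ D : ℝ, RDP (bern p) hamming dTV D Pc = 0 ↔ 2 * p * (1 - p) + (2 * p - 1) * Pc ≤ D) ∧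
    -- the constant kernel a = b = (1−p) + P (i.e. P(X̂ = 0) = (1−p) + P regardless of X):
    (∀ K : Bool → Bool → ℝ,
      K = (fun _ y => if y then p - Pc else (1 - p) + Pc) →
      IsKernel K ∧
      expDistortion (bern p) hamming K = 2 * p * (1 - p) + (2 * p - 1) * Pc ∧
      dTV (bern p) (outDist (bern p) K) = Pc ∧
      mutualInfo (bern p) K = 0) := by
  have hp1 : p < 1 := lt_of_le_of_lt hp2 (by norm_num)
  have hlogvv : ∀ v : ℝ, Real.log (v / v) = 0 := by
    intro v
    rcases eq_or_ne v 0 with h | h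
    · simp [h]
    · simp [div_self h]
  -- Part 2
  have main2 : ∀ K : Bool → Bool → ℝ,
      K = (fun _ y => if y then p - Pc else (1 - p) + Pc) →
      IsKernel K ∧
      expDistortion (bern p) hamming K = 2 * p * (1 - p) + (2 * p - 1) * Pc ∧
      dTV (bern p) (outDist (bern p) K) = Pc ∧
      mutualInfo (bern p) K = 0 := by
    intro K hKdef
    subst hKdef
    refine ⟨?_, ?_, ?_, ?_⟩
    · intro x
      constructor
      · intro y
        cases y <;> simp <;> linarith
      · rw [Fintype.sum_bool]; simp
    · simp [expDistortion, bern, hamming, Fintype.sum_bool]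
      ring
    · simp only [dTV, outDist, bern, Fintype.sum_bool]
      simp only [if_true, if_false, Bool.false_eq_true]
      rw [show p - (p * (p - Pc) + (1 - p) * (p - Pc)) = Pc from by ring,
        show 1 - p - (p * (1 - p + Pc) + (1 - p) * (1 - p + Pc)) = -Pc from by ring,
        abs_neg, abs_of_nonneg hP0]
      ring
    · simp only [mutualInfo, outDist, bern, Fintype.sum_bool]
      simp only [if_true, if_false, Bool.false_eq_true]
      rw [show p * (p - Pc) + (1 - p) * (p - Pc) = p - Pc from by ring,
        show p * (1 - p + Pc) + (1 - p) * (1 - p + Pc) = 1 - p + Pc from by ring,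
        hlogvv, hlogvv]
      ring
  refine ⟨?_, main2⟩
  intro D
  constructor
  · -- converse
    intro h
    by_contra hcon
    push_neg at hcon
    have ht : 0 < 2 * p * (1 - p) + (2 * p - 1) * Pc - D := by linarith
    set t : ℝ := 2 * p * (1 - p) + (2 * p - 1) * Pc - D with htdef
    have hc0 : (0:ℝ) < 2 * p * (1 - p) := by nlinarith
    have hL : 0 < t ^ 2 / (2 * p * (1 - p)) := div_pos (pow_pos ht 2) hc0
    have hlb : ENNReal.ofReal (t ^ 2 / (2 * p * (1 - p))) ≤ RDP (bern p) hamming dTV D Pc := by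
      refine le_sInf ?_
      rintro r ⟨K, hK, hD, hTV, rfl⟩
      have hKf := (hK false)
      have hKt := (hK true)
      have hsf := hKf.2
      have hst := hKt.2
      rw [Fintype.sum_bool] at hsf hst
      have ha0 : 0 ≤ K false false := hKf.1 false
      have hb0 : 0 ≤ K true false := hKt.1 false
      have ha1 : K false false ≤ 1 := by linarith [hKf.1 true]
      have hb1 : K true false ≤ 1 := by linarith [hKt.1 true]
      have hKft : K false true = 1 - K false false := by linarith
      have hKtt : K true true = 1 - K true false := by linarith
      have bt : bern p true = p := rfl
      have bf : bern p false = 1 - p := rfl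
      have o_false : outDist (bern p) K false
          = (1 - p) * K false false + p * K true false := by
        simp only [outDist, Fintype.sum_bool, bt, bf]; ring
      have o_true : outDist (bern p) K true
          = 1 - ((1 - p) * K false false + p * K true false) := by
        simp only [outDist, Fintype.sum_bool, bt, bf, hKtt, hKft]; ring
      have hE : expDistortion (bern p) hamming K
          = p * K true false + (1 - p) * (1 - K false false) := by
        simp only [expDistortion, Fintype.sum_bool, bt, bf, hKft,
          show hamming true true = 0 from rfl, show hamming false false = 0 from rfl,
          show hamming true false = 1 from rfl, show hamming false true = 1 from rfl]
        ring
      have hdtv : dTV (bern p) (outDist (bern p) K)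
          = |(1 - p) - ((1 - p) * K false false + p * K true false)| := by
        have hA : bern p true - outDist (bern p) K true
            = -((1 - p) - ((1 - p) * K false false + p * K true false)) := by
          rw [bt, o_true]; ring
        have hB : bern p false - outDist (bern p) K false
            = (1 - p) - ((1 - p) * K false false + p * K true false) := by
          rw [bf, o_false]
        simp only [dTV, Fintype.sum_bool, hA, hB, abs_neg]
        ring
      have hTV' : -((1 - p) - ((1 - p) * K false false + p * K true false)) ≤ Pc := by
        refine le_trans (neg_le_abs _) ?_
        rw [← hdtv]; exact hTV
      have hIeq : mutualInfo (bern p) K =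
          (1 - p) * (K false false * Real.log (K false false /
              ((1 - p) * K false false + p * K true false)) +
            (1 - K false false) * Real.log ((1 - K false false) /
              (1 - ((1 - p) * K false false + p * K true false)))) +
          p * (K true false * Real.log (K true false /
              ((1 - p) * K false false + p * K true false)) +
            (1 - K true false) * Real.log ((1 - K true false) /
              (1 - ((1 - p) * K false false + p * K true false)))) := by
        simp only [mutualInfo, Fintype.sum_bool]
        rw [o_true, o_false, hKtt, hKft, bt, bf]
        ring
      have hkey := key p (K false false) (K true false) hp hp1 ⟨ha0, ha1⟩ ⟨hb0, hb1⟩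
      rw [← hIeq] at hkey
      have hD' : p * K true false + (1 - p) * (1 - K false false) ≤ D := by
        rw [← hE]; exact hD
      have hprod : 0 ≤ (1 - 2 * p) *
          ((1 - p) + Pc - ((1 - p) * K false false + p * K true false)) :=
        mul_nonneg (by linarith) (by linarith)
      have hab : t ≤ 2 * p * (1 - p) * (K false false - K true false) := by
        rw [htdef]; linarith [hprod, hD']
      apply ENNReal.ofReal_le_ofReal
      rw [div_le_iff₀ hc0]
      have h1 : 0 ≤ (2 * p * (1 - p) * (K false false - K true false) - t) *
          (2 * p * (1 - p) * (K false false - K true false) + t) :=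
        mul_nonneg (by linarith [hab]) (by linarith [hab, ht.le])
      have h2 := mul_le_mul_of_nonneg_right hkey hc0.le
      nlinarith [h1, h2]
    rw [h] at hlb
    rw [le_zero_iff, ENNReal.ofReal_eq_zero] at hlb
    linarith
  · -- achievability
    intro h
    obtain ⟨hker, hE, hTVeq, hI⟩ := main2 _ rfl
    refine le_antisymm ?_ zero_le
    refine sInf_le ?_
    exact ⟨_, hker, by rw [hE]; exact h, le_of_eq hTVeq, by rw [hI]; simp⟩
end
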